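/- arXiv:2006.13986 — 5 statements merged into one kernel-verified Lean document; each statement's English description precedes it below -/
import Mathlib

section
/- The Weyl–Moyal star product, defined on complex polynomials in two variables y₁, y₂ by (f ⋆ g)(y) = exp[p₁·p₂] f(y+y₁) g(y+y₂)|_{y₁=y₂=0} where p_i·p_j = -pᵢᵅ ε_{αβ} pⱼᵝ is the symplectic pairing of derivatives, is an associative product. -/
/- STATEMENT 0: The Weyl–Moyal star product on complex polynomials in two
variables, `(f ⋆ g)(y) = exp[−∂_{y₁}ᵅ ε_{αβ} ∂_{y₂}ᵝ] f(y+y₁) g(y+y₂)|_{y₁=y₂=0}`,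
is associative.  We realize the formula by doubling variables: `f` lives in
variables 0,1 and `g` in variables 2,3 of `MvPolynomial (Fin 4) ℂ`; the
bidifferential operator is `∂₁∂₂ − ∂₀∂₃ = −(ε_{αβ} ∂_{1,α}∂_{2,β})`
(with `ε₁₂ = 1`), the exponential is the (finite) Taylor sum, and setting
`y₁ = y₂ = 0` after shifting corresponds to identifying both groups of
variables with `y`. -/

open MvPolynomial

noncomputable section

abbrev P2 := MvPolynomial (Fin 2) ℂ
abbrev P4 := MvPolynomial (Fin 4) ℂ

/-- embed the first factor: variables `y₁` ↦ variables 0,1 -/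
def emb1 : Fin 2 → Fin 4 := fun i => Fin.castLE (by omega) i

/-- embed the second factor: variables `y₂` ↦ variables 2,3 -/
def emb2 : Fin 2 → Fin 4 := fun i => i.addNat 2

/-- identify both groups of variables with `y` (evaluation at `y₁ = y₂ = 0`
after the shift by `y`). -/
def collapse : Fin 4 → Fin 2 := ![0, 1, 0, 1]

/-- the symplectic bidifferential `−∂_{y₁}ᵅ ε_{αβ} ∂_{y₂}ᵝ
  = ∂_{1,2}∂_{2,1} − ∂_{1,1}∂_{2,2}` acting on the doubled variables. -/
def moyalOp : P4 →ₗ[ℂ] P4 :=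
  (pderiv (1 : Fin 4) :
      Derivation ℂ P4 P4).toLinearMap ∘ₗ (pderiv (2 : Fin 4) :
      Derivation ℂ P4 P4).toLinearMap
    - (pderiv (0 : Fin 4) :
      Derivation ℂ P4 P4).toLinearMap ∘ₗ (pderiv (3 : Fin 4) :
      Derivation ℂ P4 P4).toLinearMap

/-- the Weyl–Moyal star product: `exp[p₁·p₂] f(y+y₁)g(y+y₂)|_{y₁=y₂=0}`.
The exponential series is finite on polynomials; all terms beyond
`totalDegree f + totalDegree g` vanish. -/
def moyalStar (f g : P2) : P2 :=
  ∑ n ∈ Finset.range (f.totalDegree + g.totalDegree + 1),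
    ((n.factorial : ℂ))⁻¹ •
      rename collapse ((moyalOp ^ n) (rename emb1 f * rename emb2 g))

/-! ### Auxiliary development -/

section DegreeLemmas

variable {σ : Type*} [DecidableEq σ]

lemma moyalAux_mem_support_pderiv (i : σ) (p : MvPolynomial σ ℂ) {s : σ →₀ ℕ}
    (hs : s ∈ (pderiv i p).support) :
    (s.sum fun _ e => e) + 1 ≤ p.totalDegree := by
  classical
  have hrep : pderiv i p
      = ∑ t ∈ p.support, monomial (t - Finsupp.single i 1) (coeff t p * t i) := by
    conv_lhs => rw [p.as_sum]
    rw [map_sum]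
    simp [pderiv_monomial]
  rw [hrep] at hs
  obtain ⟨t, ht, hst⟩ := Finset.mem_biUnion.mp (MvPolynomial.support_sum hs)
  by_cases hc : coeff t p * t i = 0
  · simp [hc, support_monomial] at hst
  · rw [support_monomial, if_neg hc] at hst
    have hti : t i ≠ 0 := fun h => hc (by simp [h])
    have hle : Finsupp.single i 1 ≤ t :=
      Finsupp.single_le_iff.mpr (Nat.one_le_iff_ne_zero.mpr hti)
    have hst' : s = t - Finsupp.single i 1 := Finset.mem_singleton.mp hst
    have ht' : s + Finsupp.single i 1 = t := by
      rw [hst']; exact tsub_add_cancel_of_le hle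
    have hsum : (t.sum fun _ e => e) = (s.sum fun _ e => e) + 1 := by
      rw [← ht', Finsupp.sum_add_index' (fun _ => rfl) (fun _ _ _ => rfl),
        Finsupp.sum_single_index rfl]
    have := le_totalDegree (p := p) ht
    omega

lemma moyalAux_pderiv_deg (i : σ) (p : MvPolynomial σ ℂ) (h : pderiv i p ≠ 0) :
    (pderiv i p).totalDegree + 1 ≤ p.totalDegree := by
  classical
  obtain ⟨s, hs⟩ := Finset.nonempty_iff_ne_empty.mpr
    (fun he => h (support_eq_empty.mp he))
  have h1 := moyalAux_mem_support_pderiv i p hs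
  have h2 : (pderiv i p).totalDegree ≤ p.totalDegree - 1 := by
    rw [totalDegree]
    exact Finset.sup_le fun t ht => by
      have := moyalAux_mem_support_pderiv i p ht; omega
  omega

/-- the basic bidifferential `∂ₐ∂_b − ∂_c∂_e`. -/
def pairOp (a b c e : σ) : Module.End ℂ (MvPolynomial σ ℂ) :=
  (pderiv a : Derivation ℂ (MvPolynomial σ ℂ) _).toLinearMap ∘ₗ
    (pderiv b : Derivation ℂ (MvPolynomial σ ℂ) _).toLinearMap -
  (pderiv c : Derivation ℂ (MvPolynomial σ ℂ) _).toLinearMap ∘ₗ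
    (pderiv e : Derivation ℂ (MvPolynomial σ ℂ) _).toLinearMap

omit [DecidableEq σ] in
lemma pairOp_apply (a b c e : σ) (p : MvPolynomial σ ℂ) :
    pairOp a b c e p = pderiv a (pderiv b p) - pderiv c (pderiv e p) := rfl

lemma pairOp_lowers (a b c e : σ) (p : MvPolynomial σ ℂ) :
    pairOp a b c e p = 0 ∨ (pairOp a b c e p).totalDegree + 2 ≤ p.totalDegree := by
  have key : ∀ u v : σ, pderiv u (pderiv v p) = 0 ∨
      (pderiv u (pderiv v p)).totalDegree + 2 ≤ p.totalDegree := by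
    intro u v
    by_cases h1 : pderiv v p = 0
    · left; simp [h1]
    by_cases h2 : pderiv u (pderiv v p) = 0
    · left; exact h2
    right
    have := moyalAux_pderiv_deg v p h1
    have := moyalAux_pderiv_deg u (pderiv v p) h2
    omega
  rcases key a b with hx | hx <;> rcases key c e with hy | hy
  · left; rw [pairOp_apply, hx, hy, sub_zero]
  · right; rw [pairOp_apply, hx, zero_sub, totalDegree_neg]; omega
  · right; rw [pairOp_apply, hy, sub_zero]; omega
  · right
    rw [pairOp_apply]
    have := totalDegree_sub (pderiv a (pderiv b p)) (pderiv c (pderiv e p))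
    omega

/-- operators that strictly lower total degree by two. -/
def Lowers (T : Module.End ℂ (MvPolynomial σ ℂ)) : Prop :=
  ∀ p, T p = 0 ∨ (T p).totalDegree + 2 ≤ p.totalDegree

lemma pairOp_lowers' (a b c e : σ) : Lowers (pairOp a b c e) :=
  fun p => pairOp_lowers a b c e p

omit [DecidableEq σ] in
lemma lowers_pow {T : Module.End ℂ (MvPolynomial σ ℂ)} (hT : Lowers T) :
    ∀ (n : ℕ) (p), (T ^ n) p = 0 ∨ ((T ^ n) p).totalDegree + 2 * n ≤ p.totalDegree := by
  intro n
  induction n with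
  | zero => intro p; right; simp
  | succ n ih =>
    intro p
    have hs : (T ^ (n + 1)) p = (T ^ n) (T p) := by
      rw [pow_succ, Module.End.mul_apply]
    rcases hT p with h0 | h0
    · left; rw [hs, h0, map_zero]
    rcases ih (T p) with h1 | h1
    · left; rw [hs, h1]
    · right; rw [hs]; omega

omit [DecidableEq σ] in
lemma lowers_pow_vanish {T : Module.End ℂ (MvPolynomial σ ℂ)} (hT : Lowers T)
    (n : ℕ) (p : MvPolynomial σ ℂ) (h : p.totalDegree < 2 * n) : (T ^ n) p = 0 := by
  rcases lowers_pow hT n p with h0 | h0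
  · exact h0
  · omega

omit [DecidableEq σ] in
lemma lowers_pow_deg {T : Module.End ℂ (MvPolynomial σ ℂ)} (hT : Lowers T) (n : ℕ)
    (p : MvPolynomial σ ℂ) : ((T ^ n) p).totalDegree ≤ p.totalDegree := by
  rcases lowers_pow hT n p with h0 | h0
  · simp [h0]
  · omega

omit [DecidableEq σ] in
lemma lowers_pow_pow_vanish {T S : Module.End ℂ (MvPolynomial σ ℂ)}
    (hT : Lowers T) (hS : Lowers S) (i j : ℕ) (p : MvPolynomial σ ℂ)
    (h : p.totalDegree < 2 * (i + j)) : (T ^ i) ((S ^ j) p) = 0 := by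
  rcases lowers_pow hS j p with h0 | h0
  · rw [h0, map_zero]
  · exact lowers_pow_vanish hT i _ (by omega)

lemma moyalAux_pderiv_pderiv (i j : σ) (p : MvPolynomial σ ℂ) :
    pderiv i (pderiv j p) = pderiv j (pderiv i p) := by
  induction p using MvPolynomial.induction_on with
  | C a => simp
  | add p q hp hq => simp [hp, hq]
  | mul_X p k hp =>
    simp only [pderiv_mul, map_add, hp]
    have hc : ∀ u : σ, pderiv u (X k : MvPolynomial σ ℂ) = C (if k = u then 1 else 0) := by
      intro u
      rw [pderiv_X, Pi.single_apply]
      split <;> simp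
    simp only [hc]
    have hCz : ∀ (u v : σ), pderiv u (C (if k = v then (1:ℂ) else 0) : MvPolynomial σ ℂ) = 0 :=
      fun u v => pderiv_C
    simp only [pderiv_mul, hCz, mul_zero, add_zero]
    ring

/-- pderiv-based endomorphisms commute. -/
def dOp (i : σ) : Module.End ℂ (MvPolynomial σ ℂ) :=
  (pderiv i : Derivation ℂ (MvPolynomial σ ℂ) _).toLinearMap

lemma dOp_commute (i j : σ) : Commute (dOp i) (dOp j) := by
  apply LinearMap.ext
  intro p
  simp only [Module.End.mul_apply]
  exact moyalAux_pderiv_pderiv i j p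

lemma pairOp_eq_mul (a b c e : σ) :
    pairOp a b c e = dOp a * dOp b - dOp c * dOp e := rfl

omit [DecidableEq σ] in
lemma moyalAux_commute_pairs {R : Type*} [Ring R] (d : σ → R)
    (h : ∀ i j, Commute (d i) (d j)) (a b c e a' b' c' e' : σ) :
    Commute (d a * d b - d c * d e) (d a' * d b' - d c' * d e') := by
  apply Commute.sub_left <;> apply Commute.sub_right <;>
    exact Commute.mul_left ((h _ _).mul_right (h _ _))
      ((h _ _).mul_right (h _ _))

lemma pairOp_commute (a b c e a' b' c' e' : σ) :
    Commute (pairOp a b c e) (pairOp a' b' c' e') := by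
  rw [pairOp_eq_mul, pairOp_eq_mul]
  exact moyalAux_commute_pairs dOp dOp_commute a b c e a' b' c' e'

end DegreeLemmas

/-! ### the abstract truncated-exponential lemma -/

lemma exp_sum_aux {M : Type*} [AddCommGroup M] [Module ℂ M]
    (A B : Module.End ℂ M) (hAB : Commute A B) (N : ℕ) (v : M)
    (hv : ∀ i j : ℕ, N ≤ i + j → (A ^ i) ((B ^ j) v) = 0) :
    ∑ m ∈ Finset.range N, (m.factorial : ℂ)⁻¹ • ((A + B) ^ m) v
      = ∑ i ∈ Finset.range N, ∑ j ∈ Finset.range N,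
          ((i.factorial : ℂ)⁻¹ * (j.factorial : ℂ)⁻¹) • (A ^ i) ((B ^ j) v) := by
  have step : ∀ m, (m.factorial : ℂ)⁻¹ • ((A + B) ^ m) v
      = ∑ k ∈ Finset.range (m + 1),
          ((k.factorial : ℂ)⁻¹ * ((m - k).factorial : ℂ)⁻¹) • (A ^ k) ((B ^ (m - k)) v) := by
    intro m
    rw [hAB.add_pow, LinearMap.sum_apply, Finset.smul_sum]
    refine Finset.sum_congr rfl fun k hk => ?_
    have hkm : k ≤ m := by simpa using Nat.lt_succ_iff.mp (Finset.mem_range.mp hk)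
    have h1 : (A ^ k * B ^ (m - k) * (m.choose k : Module.End ℂ M)) v
        = (m.choose k : ℂ) • (A ^ k) ((B ^ (m - k)) v) := by
      rw [Module.End.mul_apply, Module.End.mul_apply, Module.End.natCast_apply,
        map_nsmul, map_nsmul, Nat.cast_smul_eq_nsmul]
    rw [h1, smul_smul]
    congr 1
    have hfac : (m.choose k : ℂ) * k.factorial * (m - k).factorial = m.factorial := by
      exact_mod_cast congrArg (Nat.cast : ℕ → ℂ)
        (Nat.choose_mul_factorial_mul_factorial hkm)
    have hk0 : (k.factorial : ℂ) ≠ 0 := Nat.cast_ne_zero.mpr k.factorial_ne_zero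
    have hmk0 : ((m - k).factorial : ℂ) ≠ 0 := Nat.cast_ne_zero.mpr (m - k).factorial_ne_zero
    have hm0 : (m.factorial : ℂ) ≠ 0 := Nat.cast_ne_zero.mpr m.factorial_ne_zero
    field_simp
    linear_combination hfac
  rw [Finset.sum_congr rfl fun m _ => step m]
  set g : ℕ → ℕ → M := fun i j =>
    ((i.factorial : ℂ)⁻¹ * (j.factorial : ℂ)⁻¹) • (A ^ i) ((B ^ j) v) with hg
  have hzero : ∀ i j : ℕ, N ≤ i + j → g i j = 0 := fun i j hij => by
    rw [hg]; simp [hv i j hij]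
  rw [← Finset.sum_product']
  rw [← Finset.sum_filter_add_sum_filter_not (Finset.range N ×ˢ Finset.range N)
    (fun p => p.1 + p.2 < N)]
  have h2 : ∑ p ∈ (Finset.range N ×ˢ Finset.range N).filter (fun p => ¬ p.1 + p.2 < N),
      g p.1 p.2 = 0 := by
    refine Finset.sum_eq_zero fun p hp => ?_
    rw [Finset.mem_filter] at hp
    exact hzero p.1 p.2 (by omega)
  rw [h2, add_zero, Finset.sum_sigma']
  refine Finset.sum_nbij' (fun x => (x.2, x.1 - x.2)) (fun p => ⟨p.1 + p.2, p.1⟩)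
    ?_ ?_ ?_ ?_ ?_
  · rintro ⟨m, k⟩ hx
    simp only [Finset.mem_sigma, Finset.mem_range] at hx
    simp only [Finset.mem_filter, Finset.mem_product, Finset.mem_range]
    omega
  · rintro ⟨i, j⟩ hp
    simp only [Finset.mem_filter, Finset.mem_product, Finset.mem_range] at hp
    simp only [Finset.mem_sigma, Finset.mem_range]
    omega
  · rintro ⟨m, k⟩ hx
    simp only [Finset.mem_sigma, Finset.mem_range] at hx
    simp only [Sigma.mk.inj_iff]
    constructor
    · omega
    · exact heq_of_eq rfl
  · rintro ⟨i, j⟩ hp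
    simp only [Finset.mem_filter, Finset.mem_product, Finset.mem_range] at hp
    simp only [Prod.mk.injEq]
    exact ⟨trivial, by omega⟩
  · rintro ⟨m, k⟩ hx
    rfl

/-! ### chain rule for `rename` -/

lemma pderiv_rename_sum {σ τ : Type*} [Fintype σ] [DecidableEq σ] [DecidableEq τ]
    (φ : σ → τ) (j : τ) (p : MvPolynomial σ ℂ) :
    pderiv j (rename φ p) = ∑ i : σ, if φ i = j then rename φ (pderiv i p) else 0 := by
  induction p using MvPolynomial.induction_on with
  | C a => simp
  | add p q hp hq =>
    rw [map_add, map_add, hp, hq, ← Finset.sum_add_distrib]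
    refine Finset.sum_congr rfl fun i _ => ?_
    split <;> simp
  | mul_X p k hp =>
    have h2 : ∀ i : σ, pderiv i (p * X k) = pderiv i p * X k + if k = i then p else 0 := by
      intro i
      rw [pderiv_mul, pderiv_X, Pi.single_apply]
      split <;> simp
    rw [map_mul, rename_X, pderiv_mul, hp, Finset.sum_mul]
    have h3 : pderiv j (X (φ k) : MvPolynomial τ ℂ) = if φ k = j then 1 else 0 := by
      rw [pderiv_X, Pi.single_apply]
    rw [h3]
    have h4 : ∀ i : σ, (if φ i = j then rename φ (pderiv i (p * X k)) else 0)
        = (if φ i = j then rename φ (pderiv i p) else 0) * X (φ k)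
          + (if k = i then (if φ i = j then rename φ p else 0) else 0) := by
      intro i
      rw [h2 i]
      split
      · rw [map_add, map_mul, rename_X]
        congr 1
        split <;> simp
      · simp
    rw [Finset.sum_congr rfl fun i _ => h4 i, Finset.sum_add_distrib]
    congr 1
    rw [Finset.sum_ite_eq Finset.univ k (fun i => if φ i = j then rename φ p else 0)]
    simp only [Finset.mem_univ, if_true]
    split <;> simp

lemma pderiv_rename_zero {σ τ : Type*} [Fintype σ] [DecidableEq σ] [DecidableEq τ]
    {φ : σ → τ} {i : τ} (h : ∀ a, φ a ≠ i) (p : MvPolynomial σ ℂ) :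
    pderiv i (rename φ p) = 0 := by
  rw [pderiv_rename_sum]
  exact Finset.sum_eq_zero fun a _ => if_neg (h a)

/-! ### the six-variable picture -/

abbrev P6 := MvPolynomial (Fin 6) ℂ

def w1 : Fin 2 → Fin 6 := ![0, 1]
def w2 : Fin 2 → Fin 6 := ![2, 3]
def w3 : Fin 2 → Fin 6 := ![4, 5]
def i12 : Fin 4 → Fin 6 := ![0, 1, 2, 3]
def i23 : Fin 4 → Fin 6 := ![2, 3, 4, 5]
def rhoL : Fin 6 → Fin 4 := ![0, 1, 0, 1, 2, 3]
def rhoR : Fin 6 → Fin 4 := ![0, 1, 2, 3, 2, 3]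
def c6 : Fin 6 → Fin 2 := ![0, 1, 0, 1, 0, 1]

def opA : Module.End ℂ P6 := pairOp 1 2 0 3
def opB : Module.End ℂ P6 := pairOp 1 4 0 5
def opC : Module.End ℂ P6 := pairOp 3 4 2 5

lemma moyalOp_eq : moyalOp = pairOp (σ := Fin 4) 1 2 0 3 := rfl

lemma moyal_lowers : Lowers (σ := Fin 4) moyalOp := by
  rw [moyalOp_eq]; exact pairOp_lowers' 1 2 0 3

lemma rename_pairOp {σ τ : Type*} [DecidableEq σ] [DecidableEq τ] {φ : σ → τ}
    (hφ : Function.Injective φ) (a b c e : σ) (p : MvPolynomial σ ℂ) :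
    rename φ (pairOp a b c e p) = pairOp (φ a) (φ b) (φ c) (φ e) (rename φ p) := by
  rw [pairOp_apply, pairOp_apply, map_sub]
  simp [pderiv_rename hφ]

lemma rename_pairOp_pow {σ τ : Type*} [DecidableEq σ] [DecidableEq τ] {φ : σ → τ}
    (hφ : Function.Injective φ) (a b c e : σ) (n : ℕ) (p : MvPolynomial σ ℂ) :
    rename φ ((pairOp a b c e ^ n) p)
      = ((pairOp (φ a) (φ b) (φ c) (φ e)) ^ n) (rename φ p) := by
  induction n generalizing p with
  | zero => simp
  | succ n ih =>
    rw [pow_succ, Module.End.mul_apply, ih (pairOp a b c e p),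
      rename_pairOp hφ, pow_succ, Module.End.mul_apply]

/-! chain rule lemmas for the two collapse maps -/

lemma cL0 (q : P6) : pderiv (0 : Fin 4) (rename rhoL q)
    = rename rhoL (pderiv 0 q + pderiv 2 q) := by
  rw [pderiv_rename_sum rhoL, Fin.sum_univ_six, show rhoL 0 = 0 by decide,
    show rhoL 1 = 1 by decide, show rhoL 2 = 0 by decide, show rhoL 3 = 1 by decide,
    show rhoL 4 = 2 by decide, show rhoL 5 = 3 by decide, map_add]
  simp +decide

lemma cL1 (q : P6) : pderiv (1 : Fin 4) (rename rhoL q)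
    = rename rhoL (pderiv 1 q + pderiv 3 q) := by
  rw [pderiv_rename_sum rhoL, Fin.sum_univ_six, show rhoL 0 = 0 by decide,
    show rhoL 1 = 1 by decide, show rhoL 2 = 0 by decide, show rhoL 3 = 1 by decide,
    show rhoL 4 = 2 by decide, show rhoL 5 = 3 by decide, map_add]
  simp +decide

lemma cL2 (q : P6) : pderiv (2 : Fin 4) (rename rhoL q)
    = rename rhoL (pderiv 4 q) := by
  rw [pderiv_rename_sum rhoL, Fin.sum_univ_six, show rhoL 0 = 0 by decide,
    show rhoL 1 = 1 by decide, show rhoL 2 = 0 by decide, show rhoL 3 = 1 by decide,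
    show rhoL 4 = 2 by decide, show rhoL 5 = 3 by decide]
  simp +decide

lemma cL3 (q : P6) : pderiv (3 : Fin 4) (rename rhoL q)
    = rename rhoL (pderiv 5 q) := by
  rw [pderiv_rename_sum rhoL, Fin.sum_univ_six, show rhoL 0 = 0 by decide,
    show rhoL 1 = 1 by decide, show rhoL 2 = 0 by decide, show rhoL 3 = 1 by decide,
    show rhoL 4 = 2 by decide, show rhoL 5 = 3 by decide]
  simp +decide

lemma cR0 (q : P6) : pderiv (0 : Fin 4) (rename rhoR q)
    = rename rhoR (pderiv 0 q) := by
  rw [pderiv_rename_sum rhoR, Fin.sum_univ_six, show rhoR 0 = 0 by decide,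
    show rhoR 1 = 1 by decide, show rhoR 2 = 2 by decide, show rhoR 3 = 3 by decide,
    show rhoR 4 = 2 by decide, show rhoR 5 = 3 by decide]
  simp +decide

lemma cR1 (q : P6) : pderiv (1 : Fin 4) (rename rhoR q)
    = rename rhoR (pderiv 1 q) := by
  rw [pderiv_rename_sum rhoR, Fin.sum_univ_six, show rhoR 0 = 0 by decide,
    show rhoR 1 = 1 by decide, show rhoR 2 = 2 by decide, show rhoR 3 = 3 by decide,
    show rhoR 4 = 2 by decide, show rhoR 5 = 3 by decide]
  simp +decide

lemma cR2 (q : P6) : pderiv (2 : Fin 4) (rename rhoR q)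
    = rename rhoR (pderiv 2 q + pderiv 4 q) := by
  rw [pderiv_rename_sum rhoR, Fin.sum_univ_six, show rhoR 0 = 0 by decide,
    show rhoR 1 = 1 by decide, show rhoR 2 = 2 by decide, show rhoR 3 = 3 by decide,
    show rhoR 4 = 2 by decide, show rhoR 5 = 3 by decide, map_add]
  simp +decide

lemma cR3 (q : P6) : pderiv (3 : Fin 4) (rename rhoR q)
    = rename rhoR (pderiv 3 q + pderiv 5 q) := by
  rw [pderiv_rename_sum rhoR, Fin.sum_univ_six, show rhoR 0 = 0 by decide,
    show rhoR 1 = 1 by decide, show rhoR 2 = 2 by decide, show rhoR 3 = 3 by decide,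
    show rhoR 4 = 2 by decide, show rhoR 5 = 3 by decide, map_add]
  simp +decide

lemma chainL (q : P6) : moyalOp (rename rhoL q) = rename rhoL ((opB + opC) q) := by
  rw [moyalOp_eq, pairOp_apply, cL2, cL1, cL3, cL0]
  rw [← map_sub]
  refine congrArg (rename rhoL) ?_
  rw [LinearMap.add_apply]
  unfold opB opC
  rw [pairOp_apply, pairOp_apply]
  abel

lemma chainR (q : P6) : moyalOp (rename rhoR q) = rename rhoR ((opA + opB) q) := by
  rw [moyalOp_eq, pairOp_apply, cR2, cR1, cR3, cR0]
  rw [← map_sub]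
  refine congrArg (rename rhoR) ?_
  rw [LinearMap.add_apply]
  unfold opA opB
  rw [pairOp_apply, pairOp_apply]
  simp only [map_add]
  abel

lemma chainL_pow (m : ℕ) (q : P6) :
    (moyalOp ^ m) (rename rhoL q) = rename rhoL (((opB + opC) ^ m) q) := by
  induction m generalizing q with
  | zero => simp
  | succ m ih =>
    rw [pow_succ, Module.End.mul_apply, chainL q, ih ((opB + opC) q),
      pow_succ, Module.End.mul_apply]

lemma chainR_pow (m : ℕ) (q : P6) :
    (moyalOp ^ m) (rename rhoR q) = rename rhoR (((opA + opB) ^ m) q) := by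
  induction m generalizing q with
  | zero => simp
  | succ m ih =>
    rw [pow_succ, Module.End.mul_apply, chainR q, ih ((opA + opB) q),
      pow_succ, Module.End.mul_apply]

/-! Leibniz for factors with disjoint variables -/

lemma pairOp_mul_right {σ : Type*} [DecidableEq σ] (a b c e : σ)
    (K : MvPolynomial σ ℂ) (ha : pderiv a K = 0) (hb : pderiv b K = 0)
    (hc : pderiv c K = 0) (he : pderiv e K = 0) (G : MvPolynomial σ ℂ) :
    pairOp a b c e (G * K) = pairOp a b c e G * K := by
  rw [pairOp_apply, pairOp_apply, pderiv_mul (i := b), hb, mul_zero, add_zero,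
    pderiv_mul (i := a), ha, mul_zero, add_zero,
    pderiv_mul (i := e), he, mul_zero, add_zero,
    pderiv_mul (i := c), hc, mul_zero, add_zero, sub_mul]

lemma pairOp_pow_mul_right {σ : Type*} [DecidableEq σ] (a b c e : σ)
    (K : MvPolynomial σ ℂ) (ha : pderiv a K = 0) (hb : pderiv b K = 0)
    (hc : pderiv c K = 0) (he : pderiv e K = 0) (n : ℕ) (G : MvPolynomial σ ℂ) :
    (pairOp a b c e ^ n) (G * K) = (pairOp a b c e ^ n) G * K := by
  induction n generalizing G with
  | zero => simp
  | succ n ih =>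
    rw [pow_succ, Module.End.mul_apply, pairOp_mul_right a b c e K ha hb hc he G,
      ih (pairOp a b c e G), ← Module.End.mul_apply, ← pow_succ]

/-! ### star product basics -/

lemma star_arg_deg (f g : P2) :
    (rename emb1 f * rename emb2 g).totalDegree ≤ f.totalDegree + g.totalDegree :=
  le_trans (totalDegree_mul _ _)
    (add_le_add (totalDegree_rename_le _ _) (totalDegree_rename_le _ _))

lemma star_eq (f g : P2) (N : ℕ) (hN : f.totalDegree + g.totalDegree < N) :
    moyalStar f g = ∑ n ∈ Finset.range N,
      ((n.factorial : ℂ))⁻¹ •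
        rename collapse ((moyalOp ^ n) (rename emb1 f * rename emb2 g)) := by
  simp only [moyalStar]
  apply Finset.sum_subset
  · exact Finset.range_subset_range.mpr (by omega)
  · intro n hn hnot
    simp only [Finset.mem_range, not_lt] at hnot
    have hz : (moyalOp ^ n) (rename emb1 f * rename emb2 g) = 0 :=
      lowers_pow_vanish moyal_lowers n _
        (lt_of_le_of_lt (star_arg_deg f g) (by omega))
    rw [hz]
    simp

lemma star_deg (f g : P2) :
    (moyalStar f g).totalDegree ≤ f.totalDegree + g.totalDegree := by
  simp only [moyalStar]
  refine le_trans (totalDegree_finset_sum _ _) ?_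
  apply Finset.sup_le
  intro n _
  refine le_trans (totalDegree_smul_le _ _) (le_trans (totalDegree_rename_le _ _) ?_)
  exact le_trans (lowers_pow_deg moyal_lowers n _) (star_arg_deg f g)

/-! ### the two key term identities -/

lemma left_term (f g h : P2) (m n : ℕ) :
    rename collapse ((moyalOp ^ m)
      (rename emb1 (rename collapse ((moyalOp ^ n) (rename emb1 f * rename emb2 g)))
        * rename emb2 h))
    = rename c6 (((opB + opC) ^ m)
        ((opA ^ n) (rename w1 f * rename w2 g * rename w3 h))) := by
  have hinj : Function.Injective i12 := by decide
  have s1 : ∀ X : P4, rename emb1 (rename collapse X) = rename rhoL (rename i12 X) := by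
    intro X
    rw [rename_rename, rename_rename,
      show emb1 ∘ collapse = rhoL ∘ i12 by funext x; revert x; decide]
  have s2 : rename i12 ((moyalOp ^ n) (rename emb1 f * rename emb2 g))
      = (opA ^ n) (rename w1 f * rename w2 g) := by
    rw [moyalOp_eq, rename_pairOp_pow hinj, show i12 1 = 1 by decide,
      show i12 2 = 2 by decide, show i12 0 = 0 by decide, show i12 3 = 3 by decide,
      map_mul, rename_rename, rename_rename,
      show i12 ∘ emb1 = w1 by funext x; revert x; decide,
      show i12 ∘ emb2 = w2 by funext x; revert x; decide]
    rfl
  have s3 : rename emb2 h = rename rhoL (rename w3 h) := by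
    rw [rename_rename, show rhoL ∘ w3 = emb2 by funext x; revert x; decide]
  have k0 : pderiv (0 : Fin 6) (rename w3 h) = 0 :=
    pderiv_rename_zero (by decide) h
  have k1 : pderiv (1 : Fin 6) (rename w3 h) = 0 :=
    pderiv_rename_zero (by decide) h
  have k2 : pderiv (2 : Fin 6) (rename w3 h) = 0 :=
    pderiv_rename_zero (by decide) h
  have k3 : pderiv (3 : Fin 6) (rename w3 h) = 0 :=
    pderiv_rename_zero (by decide) h
  have leib : (opA ^ n) (rename w1 f * rename w2 g * rename w3 h)
      = (opA ^ n) (rename w1 f * rename w2 g) * rename w3 h := by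
    unfold opA
    exact pairOp_pow_mul_right 1 2 0 3 (rename w3 h) k1 k2 k0 k3 n _
  rw [s1, s2, s3, ← map_mul, chainL_pow, rename_rename,
    show collapse ∘ rhoL = c6 by funext x; revert x; decide, leib]

lemma right_term (f g h : P2) (m n : ℕ) :
    rename collapse ((moyalOp ^ m)
      (rename emb1 f *
        rename emb2 (rename collapse ((moyalOp ^ n) (rename emb1 g * rename emb2 h)))))
    = rename c6 (((opA + opB) ^ m)
        ((opC ^ n) (rename w1 f * rename w2 g * rename w3 h))) := by
  have hinj : Function.Injective i23 := by decide
  have s1 : ∀ X : P4, rename emb2 (rename collapse X) = rename rhoR (rename i23 X) := by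
    intro X
    rw [rename_rename, rename_rename,
      show emb2 ∘ collapse = rhoR ∘ i23 by funext x; revert x; decide]
  have s2 : rename i23 ((moyalOp ^ n) (rename emb1 g * rename emb2 h))
      = (opC ^ n) (rename w2 g * rename w3 h) := by
    rw [moyalOp_eq, rename_pairOp_pow hinj, show i23 1 = 3 by decide,
      show i23 2 = 4 by decide, show i23 0 = 2 by decide, show i23 3 = 5 by decide,
      map_mul, rename_rename, rename_rename,
      show i23 ∘ emb1 = w2 by funext x; revert x; decide,
      show i23 ∘ emb2 = w3 by funext x; revert x; decide]
    rfl
  have s3 : rename emb1 f = rename rhoR (rename w1 f) := by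
    rw [rename_rename, show rhoR ∘ w1 = emb1 by funext x; revert x; decide]
  have k2 : pderiv (2 : Fin 6) (rename w1 f) = 0 :=
    pderiv_rename_zero (by decide) f
  have k3 : pderiv (3 : Fin 6) (rename w1 f) = 0 :=
    pderiv_rename_zero (by decide) f
  have k4 : pderiv (4 : Fin 6) (rename w1 f) = 0 :=
    pderiv_rename_zero (by decide) f
  have k5 : pderiv (5 : Fin 6) (rename w1 f) = 0 :=
    pderiv_rename_zero (by decide) f
  have leib : (opC ^ n) (rename w2 g * rename w3 h * rename w1 f)
      = (opC ^ n) (rename w2 g * rename w3 h) * rename w1 f := by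
    unfold opC
    exact pairOp_pow_mul_right 3 4 2 5 (rename w1 f) k3 k4 k2 k5 n _
  have hcomm : rename w2 g * rename w3 h * rename w1 f
      = rename w1 f * rename w2 g * rename w3 h := by ring
  rw [s1, s2, s3, ← map_mul, chainR_pow, rename_rename,
    show collapse ∘ rhoR = c6 by funext x; revert x; decide,
    mul_comm (rename w1 f), ← leib, hcomm]

set_option maxHeartbeats 2000000

/-- The Weyl–Moyal star product is associative. -/
theorem moyalStar_assoc (f g h : P2) :
    moyalStar (moyalStar f g) h = moyalStar f (moyalStar g h) := by
  classical
  set N := f.totalDegree + g.totalDegree + h.totalDegree + 1 with hNdef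
  have hfg := star_deg f g
  have hgh := star_deg g h
  set H : P6 := rename w1 f * rename w2 g * rename w3 h with hHdef
  have hHdeg : H.totalDegree < N := by
    have h1 := totalDegree_mul (rename w1 f * rename w2 g) (rename w3 h)
    have h2 := totalDegree_mul (rename w1 f) (rename w2 g)
    have h3 := totalDegree_rename_le w1 f
    have h4 := totalDegree_rename_le w2 g
    have h5 := totalDegree_rename_le w3 h
    rw [hHdef, hNdef]
    omega
  have lowA : Lowers opA := pairOp_lowers' 1 2 0 3
  have lowB : Lowers opB := pairOp_lowers' 1 4 0 5
  have lowC : Lowers opC := pairOp_lowers' 3 4 2 5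
  have hAB : Commute opA opB := pairOp_commute 1 2 0 3 1 4 0 5
  have hAC : Commute opA opC := pairOp_commute 1 2 0 3 3 4 2 5
  have hBC : Commute opB opC := pairOp_commute 1 4 0 5 3 4 2 5
  -- expand both sides into double sums in the six-variable picture
  have hL : moyalStar (moyalStar f g) h
      = ∑ m ∈ Finset.range N, ∑ n ∈ Finset.range N,
          ((m.factorial : ℂ)⁻¹ * (n.factorial : ℂ)⁻¹) •
            rename c6 (((opB + opC) ^ m) ((opA ^ n) H)) := by
    rw [star_eq (moyalStar f g) h N (by omega)]
    refine Finset.sum_congr rfl fun m _ => ?_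
    rw [star_eq f g N (by omega)]
    rw [map_sum]
    simp only [map_smul]
    rw [Finset.sum_mul]
    simp only [smul_mul_assoc]
    rw [map_sum, map_sum, Finset.smul_sum]
    refine Finset.sum_congr rfl fun n _ => ?_
    rw [map_smul, map_smul, smul_smul, left_term, hHdef]
  have hR : moyalStar f (moyalStar g h)
      = ∑ m ∈ Finset.range N, ∑ n ∈ Finset.range N,
          ((m.factorial : ℂ)⁻¹ * (n.factorial : ℂ)⁻¹) •
            rename c6 (((opA + opB) ^ m) ((opC ^ n) H)) := by
    rw [star_eq f (moyalStar g h) N (by omega)]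
    refine Finset.sum_congr rfl fun m _ => ?_
    rw [star_eq g h N (by omega)]
    rw [map_sum]
    simp only [map_smul]
    rw [Finset.mul_sum]
    simp only [mul_smul_comm]
    rw [map_sum, map_sum, Finset.smul_sum]
    refine Finset.sum_congr rfl fun n _ => ?_
    rw [map_smul, map_smul, smul_smul, right_term, hHdef]
  rw [hL, hR]
  -- canonical triple-sum form
  set G : ℕ → ℕ → ℕ → P2 := fun a b c =>
    ((a.factorial : ℂ)⁻¹ * ((b.factorial : ℂ)⁻¹ * (c.factorial : ℂ)⁻¹)) •
      rename c6 ((opA ^ a) ((opB ^ b) ((opC ^ c) H))) with hGdef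
  have reorder : ∀ a b c : ℕ,
      (opB ^ b) ((opC ^ c) ((opA ^ a) H)) = (opA ^ a) ((opB ^ b) ((opC ^ c) H)) := by
    intro a b c
    have e : opB ^ b * (opC ^ c * opA ^ a) = opA ^ a * (opB ^ b * opC ^ c) := by
      rw [(hAC.symm.pow_pow c a).eq, ← mul_assoc, ((hAB.symm).pow_pow b a).eq, mul_assoc]
    calc (opB ^ b) ((opC ^ c) ((opA ^ a) H))
        = (opB ^ b * (opC ^ c * opA ^ a)) H := by
          rw [Module.End.mul_apply, Module.End.mul_apply]
      _ = (opA ^ a * (opB ^ b * opC ^ c)) H := by rw [e]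
      _ = (opA ^ a) ((opB ^ b) ((opC ^ c) H)) := by
          rw [Module.End.mul_apply, Module.End.mul_apply]
  have TL : ∀ n : ℕ, ∑ m ∈ Finset.range N,
      ((m.factorial : ℂ)⁻¹ * (n.factorial : ℂ)⁻¹) •
        rename c6 (((opB + opC) ^ m) ((opA ^ n) H))
      = ∑ i ∈ Finset.range N, ∑ j ∈ Finset.range N, G n i j := by
    intro n
    have hdeg : ((opA ^ n) H).totalDegree ≤ H.totalDegree := lowers_pow_deg lowA n H
    have base := exp_sum_aux opB opC hBC N ((opA ^ n) H)
      (fun i j hij => lowers_pow_pow_vanish lowB lowC i j _ (by omega))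
    calc ∑ m ∈ Finset.range N,
          ((m.factorial : ℂ)⁻¹ * (n.factorial : ℂ)⁻¹) •
            rename c6 (((opB + opC) ^ m) ((opA ^ n) H))
        = (n.factorial : ℂ)⁻¹ • rename c6
            (∑ m ∈ Finset.range N, (m.factorial : ℂ)⁻¹ • ((opB + opC) ^ m) ((opA ^ n) H)) := by
          rw [map_sum, Finset.smul_sum]
          refine Finset.sum_congr rfl fun m _ => ?_
          rw [map_smul, smul_smul, mul_comm]
      _ = (n.factorial : ℂ)⁻¹ • rename c6
            (∑ i ∈ Finset.range N, ∑ j ∈ Finset.range N,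
              ((i.factorial : ℂ)⁻¹ * (j.factorial : ℂ)⁻¹) •
                (opB ^ i) ((opC ^ j) ((opA ^ n) H))) := by rw [base]
      _ = ∑ i ∈ Finset.range N, ∑ j ∈ Finset.range N, G n i j := by
          rw [map_sum, Finset.smul_sum]
          refine Finset.sum_congr rfl fun i _ => ?_
          rw [map_sum, Finset.smul_sum]
          refine Finset.sum_congr rfl fun j _ => ?_
          rw [map_smul, smul_smul, hGdef, reorder n i j]
  have TR : ∀ n : ℕ, ∑ m ∈ Finset.range N,
      ((m.factorial : ℂ)⁻¹ * (n.factorial : ℂ)⁻¹) •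
        rename c6 (((opA + opB) ^ m) ((opC ^ n) H))
      = ∑ i ∈ Finset.range N, ∑ j ∈ Finset.range N, G i j n := by
    intro n
    have hdeg : ((opC ^ n) H).totalDegree ≤ H.totalDegree := lowers_pow_deg lowC n H
    have base := exp_sum_aux opA opB hAB N ((opC ^ n) H)
      (fun i j hij => lowers_pow_pow_vanish lowA lowB i j _ (by omega))
    calc ∑ m ∈ Finset.range N,
          ((m.factorial : ℂ)⁻¹ * (n.factorial : ℂ)⁻¹) •
            rename c6 (((opA + opB) ^ m) ((opC ^ n) H))
        = (n.factorial : ℂ)⁻¹ • rename c6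
            (∑ m ∈ Finset.range N, (m.factorial : ℂ)⁻¹ • ((opA + opB) ^ m) ((opC ^ n) H)) := by
          rw [map_sum, Finset.smul_sum]
          refine Finset.sum_congr rfl fun m _ => ?_
          rw [map_smul, smul_smul, mul_comm]
      _ = (n.factorial : ℂ)⁻¹ • rename c6
            (∑ i ∈ Finset.range N, ∑ j ∈ Finset.range N,
              ((i.factorial : ℂ)⁻¹ * (j.factorial : ℂ)⁻¹) •
                (opA ^ i) ((opB ^ j) ((opC ^ n) H))) := by rw [base]
      _ = ∑ i ∈ Finset.range N, ∑ j ∈ Finset.range N, G i j n := by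
          rw [map_sum, Finset.smul_sum]
          refine Finset.sum_congr rfl fun i _ => ?_
          rw [map_sum, Finset.smul_sum]
          refine Finset.sum_congr rfl fun j _ => ?_
          rw [map_smul, smul_smul, hGdef]
          congr 1
          ring
  rw [Finset.sum_comm]
  conv_rhs => rw [Finset.sum_comm]
  rw [Finset.sum_congr rfl fun n _ => TL n, Finset.sum_congr rfl fun n _ => TR n]
  -- final permutation of the three summation indices
  conv_rhs => rw [Finset.sum_comm]
  exact Finset.sum_congr rfl fun a _ => Finset.sum_comm
end
end

section
/- Every derivation of the first Weyl algebra A₁ over a field of characteristic zero is inner, i.e., of the form a ↦ [x, a] for some x ∈ A₁. -/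
set_option linter.unusedSectionVars false


/- STATEMENT 2: Every derivation of the first Weyl algebra A₁ over a field of
characteristic zero is inner: D a = x*a - a*x for some x. -/

/-- The first Weyl algebra: the free algebra on generators `q` (encoded `true`)
and `p` (encoded `false`) modulo the relation `q*p = p*q + 1`. -/
inductive WeylRel (k : Type*) [CommRing k] :
    FreeAlgebra k Bool → FreeAlgebra k Bool → Prop
  | qp : WeylRel k (FreeAlgebra.ι k true * FreeAlgebra.ι k false)
      (FreeAlgebra.ι k false * FreeAlgebra.ι k true + 1)

/-- The first Weyl algebra `A₁` over `k`. -/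
abbrev Weyl (k : Type*) [CommRing k] := RingQuot (WeylRel k)

/-- the generator `q` of the Weyl algebra -/
noncomputable def Wq (k : Type*) [CommRing k] : Weyl k :=
  RingQuot.mkRingHom (WeylRel k) (FreeAlgebra.ι k true)

/-- the generator `p` of the Weyl algebra -/
noncomputable def Wp (k : Type*) [CommRing k] : Weyl k :=
  RingQuot.mkRingHom (WeylRel k) (FreeAlgebra.ι k false)

noncomputable section WeylAux
open Polynomial

variable (k : Type*) [Field k] [CharZero k]

/-- basic relation -/
lemma weyl_rel : Wq k * Wp k = Wp k * Wq k + 1 := by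
  have h := RingQuot.mkRingHom_rel (WeylRel.qp (k := k))
  simpa [Wq, Wp, map_mul, map_add, map_one] using h

/-- coordinate space: `k[Y][X]`, outer variable `X`, inner variable `Y` -/
abbrev WP := Polynomial (Polynomial k)

/-- multiplication by X -/
def LX : Module.End k (WP k) := LinearMap.mulLeft k (X : WP k)

/-- multiplication by Y minus d/dX -/
def LP : Module.End k (WP k) :=
  LinearMap.mulLeft k (C (X : Polynomial k) : WP k)
    - (Polynomial.derivative (R := Polynomial k)).restrictScalars k

lemma LX_LP : LX k * LP k = LP k * LX k + 1 := by
  apply LinearMap.ext; intro f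
  simp only [LX, LP, Module.End.mul_apply, LinearMap.sub_apply, LinearMap.add_apply,
    LinearMap.mulLeft_apply, LinearMap.restrictScalars_apply, Module.End.one_apply,
    derivative_mul, derivative_X, mul_sub]
  ring

/-- the representation of the Weyl algebra on k[Y][X] -/
def Wrep : Weyl k →ₐ[k] Module.End k (WP k) :=
  RingQuot.liftAlgHom k ⟨FreeAlgebra.lift k (fun b => if b then LX k else LP k), by
    rintro x y ⟨⟩
    simp only [map_mul, map_add, map_one, FreeAlgebra.lift_ι_apply, if_true, if_false]
    exact LX_LP k⟩

lemma Wq_eq_mkAlgHom : Wq k = RingQuot.mkAlgHom k (WeylRel k) (FreeAlgebra.ι k true) := by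
  rw [Wq, ← RingQuot.mkAlgHom_coe k]; rfl

lemma Wp_eq_mkAlgHom : Wp k = RingQuot.mkAlgHom k (WeylRel k) (FreeAlgebra.ι k false) := by
  rw [Wp, ← RingQuot.mkAlgHom_coe k]; rfl

lemma Wrep_q : Wrep k (Wq k) = LX k := by
  rw [Wq_eq_mkAlgHom, Wrep, RingQuot.liftAlgHom_mkAlgHom_apply, FreeAlgebra.lift_ι_apply]; rfl

lemma Wrep_p : Wrep k (Wp k) = LP k := by
  rw [Wp_eq_mkAlgHom, Wrep, RingQuot.liftAlgHom_mkAlgHom_apply, FreeAlgebra.lift_ι_apply]; rfl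
/-- induction principle -/
lemma weyl_induction {P : Weyl k → Prop}
    (h_alg : ∀ c : k, P (algebraMap k (Weyl k) c))
    (h_q : P (Wq k)) (h_p : P (Wp k))
    (h_add : ∀ a b, P a → P b → P (a + b))
    (h_mul : ∀ a b, P a → P b → P (a * b)) : ∀ a, P a := by
  intro a
  obtain ⟨x, rfl⟩ := RingQuot.mkRingHom_surjective (WeylRel k) a
  induction x using FreeAlgebra.induction with
  | grade0 c =>
      have : RingQuot.mkRingHom (WeylRel k) (algebraMap k _ c)
          = algebraMap k (Weyl k) c := by
        rw [← RingQuot.mkAlgHom_coe k]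
        exact (RingQuot.mkAlgHom k (WeylRel k)).commutes c
      rw [this]; exact h_alg c
  | grade1 b => cases b with
      | true => exact h_q
      | false => exact h_p
  | add a b ha hb => rw [map_add]; exact h_add _ _ ha hb
  | mul a b ha hb => rw [map_mul]; exact h_mul _ _ ha hb


/-! ### The normal form map Ψ : k[Y][X] → Weyl, X^i Y^j ↦ q^i p^j -/

/-- Ψ sends `X^i * g(Y)` to `q^i * g(p)`. -/
def Psi : WP k →ₗ[k] Weyl k where
  toFun f := f.sum fun i g => (Wq k) ^ i * Polynomial.aeval (Wp k) g
  map_add' f g := by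
    refine Polynomial.sum_add_index f g _ (fun i => by simp) (fun i g₁ g₂ => by
      rw [map_add, mul_add])
  map_smul' c f := by
    simp only [RingHom.id_apply]
    show (c • f).sum _ = c • f.sum fun i g => (Wq k) ^ i * Polynomial.aeval (Wp k) g
    rw [show c • f = (algebraMap k (Polynomial k) c) • f from (algebraMap_smul _ _ _).symm]
    rw [Polynomial.sum_smul_index' f _ _ (fun i => by simp), Polynomial.smul_sum]
    congr 1; funext i g
    rw [algebraMap_smul, map_smul, mul_smul_comm]

lemma Psi_monomial (i : ℕ) (g : Polynomial k) :
    Psi k (Polynomial.monomial i g) = (Wq k) ^ i * Polynomial.aeval (Wp k) g := by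
  simp [Psi, Polynomial.sum_monomial_index]

lemma Psi_one : Psi k 1 = 1 := by
  have : (1 : WP k) = Polynomial.monomial 0 (1 : Polynomial k) := by simp
  rw [this, Psi_monomial]; simp

/-! ### commutator identities -/

lemma aeval_wp_mul_wq (g : Polynomial k) :
    Polynomial.aeval (Wp k) g * Wq k
      = Wq k * Polynomial.aeval (Wp k) g - Polynomial.aeval (Wp k) (Polynomial.derivative g) := by
  induction g using Polynomial.induction_on with
  | C a => simp [Algebra.commutes]
  | add f g hf hg => rw [map_add, add_mul, hf, hg, map_add, map_add]; noncomm_ring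
  | monomial n a ih =>
      have key : ∀ h : Polynomial k,
          Polynomial.aeval (Wp k) h * Wq k
            = Wq k * Polynomial.aeval (Wp k) h
              - Polynomial.aeval (Wp k) (Polynomial.derivative h) →
          Polynomial.aeval (Wp k) (h * Polynomial.X) * Wq k
            = Wq k * Polynomial.aeval (Wp k) (h * Polynomial.X)
              - Polynomial.aeval (Wp k) (Polynomial.derivative (h * Polynomial.X)) := by
        intro h ih
        have hd : Polynomial.derivative (h * Polynomial.X)
            = Polynomial.derivative h * Polynomial.X + h := by
          rw [Polynomial.derivative_mul, Polynomial.derivative_X, mul_one]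
        have e1 : Polynomial.aeval (Wp k) (h * Polynomial.X)
            = Polynomial.aeval (Wp k) h * Wp k := by rw [map_mul, Polynomial.aeval_X]
        have hpq : Wp k * Wq k = Wq k * Wp k - 1 :=
          eq_sub_iff_add_eq.mpr (weyl_rel k).symm
        rw [hd, e1, map_add, map_mul, Polynomial.aeval_X, mul_assoc, hpq,
          mul_sub, mul_one, ← mul_assoc, ih]
        noncomm_ring
        rw [smul_mul_assoc]
        abel
      have := key (Polynomial.C a * Polynomial.X ^ n) ih
      rw [mul_assoc, ← pow_succ] at this
      exact this

lemma wq_comm_aeval (g : Polynomial k) :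
    Wq k * Polynomial.aeval (Wp k) g - Polynomial.aeval (Wp k) g * Wq k
      = Polynomial.aeval (Wp k) (Polynomial.derivative g) := by
  rw [aeval_wp_mul_wq]; noncomm_ring

lemma aeval_wq_mul_wp (g : Polynomial k) :
    Polynomial.aeval (Wq k) g * Wp k
      = Wp k * Polynomial.aeval (Wq k) g + Polynomial.aeval (Wq k) (Polynomial.derivative g) := by
  induction g using Polynomial.induction_on with
  | C a => simp [Algebra.commutes]
  | add f g hf hg => rw [map_add, add_mul, hf, hg, map_add, map_add]; noncomm_ring
  | monomial n a ih =>
      have key : ∀ h : Polynomial k,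
          Polynomial.aeval (Wq k) h * Wp k
            = Wp k * Polynomial.aeval (Wq k) h
              + Polynomial.aeval (Wq k) (Polynomial.derivative h) →
          Polynomial.aeval (Wq k) (h * Polynomial.X) * Wp k
            = Wp k * Polynomial.aeval (Wq k) (h * Polynomial.X)
              + Polynomial.aeval (Wq k) (Polynomial.derivative (h * Polynomial.X)) := by
        intro h ih
        have hd : Polynomial.derivative (h * Polynomial.X)
            = Polynomial.derivative h * Polynomial.X + h := by
          rw [Polynomial.derivative_mul, Polynomial.derivative_X, mul_one]
        have e1 : Polynomial.aeval (Wq k) (h * Polynomial.X)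
            = Polynomial.aeval (Wq k) h * Wq k := by rw [map_mul, Polynomial.aeval_X]
        rw [hd, e1, map_add, map_mul, Polynomial.aeval_X, mul_assoc,
          weyl_rel, mul_add, mul_one, ← mul_assoc, ih]
        noncomm_ring
      have := key (Polynomial.C a * Polynomial.X ^ n) ih
      rw [mul_assoc, ← pow_succ] at this
      exact this

/-! ### derivative in Y, coefficientwise -/

def dY : WP k →ₗ[k] WP k where
  toFun f := f.sum fun i g => Polynomial.monomial i (Polynomial.derivative g)
  map_add' f g := Polynomial.sum_add_index f g _ (fun i => by simp)
    (fun i g₁ g₂ => by rw [map_add, map_add])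
  map_smul' c f := by
    simp only [RingHom.id_apply]
    show (c • f).sum _ = c • f.sum fun i g => Polynomial.monomial i (Polynomial.derivative g)
    rw [show c • f = (algebraMap k (Polynomial k) c) • f from (algebraMap_smul _ _ _).symm,
      Polynomial.sum_smul_index' f _ _ (fun i => by simp), Polynomial.smul_sum]
    congr 1; funext i g
    rw [algebraMap_smul, map_smul, Polynomial.smul_monomial]

lemma dY_monomial (i : ℕ) (g : Polynomial k) :
    dY k (Polynomial.monomial i g) = Polynomial.monomial i (Polynomial.derivative g) := by
  simp [dY, Polynomial.sum_monomial_index]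

lemma coeff_dY (f : WP k) (n : ℕ) :
    (dY k f).coeff n = Polynomial.derivative (f.coeff n) := by
  induction f using Polynomial.induction_on' with
  | add f g hf hg => rw [map_add, Polynomial.coeff_add, hf, hg, Polynomial.coeff_add, map_add]
  | monomial i g =>
      rw [dY_monomial, Polynomial.coeff_monomial, Polynomial.coeff_monomial]
      split_ifs <;> simp

lemma wq_comm_psi (f : WP k) :
    Wq k * Psi k f - Psi k f * Wq k = Psi k (dY k f) := by
  induction f using Polynomial.induction_on' with
  | add f g hf hg =>
      rw [map_add, map_add, map_add, ← hf, ← hg]; noncomm_ring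
  | monomial i g =>
      rw [Psi_monomial, dY_monomial, Psi_monomial, ← mul_assoc, ← pow_succ', pow_succ,
        mul_assoc, mul_assoc, ← mul_sub, wq_comm_aeval]

lemma psi_X_mul (f : WP k) : Psi k (Polynomial.X * f) = Wq k * Psi k f := by
  induction f using Polynomial.induction_on' with
  | add f g hf hg => rw [mul_add, map_add, hf, hg, map_add, mul_add]
  | monomial i g =>
      have : (Polynomial.X : WP k) = Polynomial.monomial 1 1 :=
        (Polynomial.monomial_one_one_eq_X).symm
      rw [this, Polynomial.monomial_mul_monomial, one_mul, Psi_monomial, Psi_monomial,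
        pow_add, pow_one, mul_assoc]

lemma psi_CX_mul (f : WP k) :
    Psi k (Polynomial.C Polynomial.X * f) = Psi k f * Wp k := by
  induction f using Polynomial.induction_on' with
  | add f g hf hg => rw [mul_add, map_add, hf, hg, map_add, add_mul]
  | monomial i g =>
      rw [Polynomial.C_mul_monomial, Psi_monomial, Psi_monomial,
        show Polynomial.X * g = g * Polynomial.X from mul_comm _ _, map_mul,
        Polynomial.aeval_X, mul_assoc]

lemma psi_mul_wq (f : WP k) :
    Psi k f * Wq k = Psi k (Polynomial.X * f - dY k f) := by
  have h : Psi k f * Wq k = Wq k * Psi k f - Psi k (dY k f) := by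
    rw [← wq_comm_psi]; noncomm_ring
  rw [h, map_sub, psi_X_mul]

lemma psi_surjective : Function.Surjective (Psi k) := by
  have mem : ∀ a : Weyl k, a ∈ LinearMap.range (Psi k) := by
    have h1 : (1 : Weyl k) ∈ LinearMap.range (Psi k) := ⟨1, Psi_one k⟩
    have key : ∀ a : Weyl k, ∀ r ∈ LinearMap.range (Psi k),
        r * a ∈ LinearMap.range (Psi k) := by
      refine weyl_induction k ?_ ?_ ?_ ?_ ?_
      · intro c r hr
        rw [show r * algebraMap k (Weyl k) c = c • r by
          rw [← Algebra.commutes, Algebra.smul_def]]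
        exact Submodule.smul_mem _ _ hr
      · rintro _ ⟨f, rfl⟩; exact ⟨_, (psi_mul_wq k f).symm⟩
      · rintro _ ⟨f, rfl⟩; exact ⟨_, (psi_CX_mul k f)⟩
      · intro a b ha hb r hr
        rw [mul_add]; exact Submodule.add_mem _ (ha r hr) (hb r hr)
      · intro a b ha hb r hr
        rw [← mul_assoc]; exact hb _ (ha r hr)
    intro a; have := key a 1 h1; rwa [one_mul] at this
  intro a; exact mem a

/-! ### Φ : the representation evaluated at 1 inverts Ψ -/

lemma aeval_LP_C (g : Polynomial k) : ∀ h : Polynomial k,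
    (Polynomial.aeval (LP k) g) (Polynomial.C h : WP k) = Polynomial.C (g * h) := by
  induction g using Polynomial.induction_on with
  | C a =>
      intro h
      rw [Polynomial.aeval_C, Module.algebraMap_end_apply, Polynomial.smul_C,
        Polynomial.smul_eq_C_mul]
  | add f g hf hg =>
      intro h
      rw [map_add, LinearMap.add_apply, hf, hg, add_mul, Polynomial.C_add]
  | monomial n a ih =>
      intro h
      have e : Polynomial.C a * Polynomial.X ^ (n + 1)
          = (Polynomial.C a * Polynomial.X ^ n) * Polynomial.X := by
        rw [mul_assoc, pow_succ]
      have eLP : (LP k) (Polynomial.C h) = Polynomial.C (Polynomial.X * h) := by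
        simp only [LP, LinearMap.sub_apply, LinearMap.mulLeft_apply,
          LinearMap.restrictScalars_apply, Polynomial.derivative_C, sub_zero, ← Polynomial.C_mul]
      rw [e, map_mul, Polynomial.aeval_X, Module.End.mul_apply, eLP, ih]
      ring_nf

lemma wrep_one_monomial (i : ℕ) (g : Polynomial k) :
    (Wrep k ((Wq k) ^ i * Polynomial.aeval (Wp k) g)) 1 = Polynomial.monomial i g := by
  rw [map_mul, map_pow, Wrep_q, show Wrep k (Polynomial.aeval (Wp k) g) = Polynomial.aeval (Wrep k (Wp k)) g from (Polynomial.aeval_algHom_apply (Wrep k) (Wp k) g).symm, Wrep_p, Module.End.mul_apply]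
  have h1 : (Polynomial.aeval (LP k) g) (1 : WP k) = Polynomial.C g := by
    have := aeval_LP_C k g 1
    simpa using this
  rw [h1, LX, LinearMap.pow_mulLeft, LinearMap.mulLeft_apply,
    show (Polynomial.X : WP k) ^ i * Polynomial.C g = Polynomial.C g * Polynomial.X ^ i from
      mul_comm _ _, Polynomial.C_mul_X_pow_eq_monomial]

lemma wrep_one_psi (f : WP k) : (Wrep k (Psi k f)) 1 = f := by
  conv_rhs => rw [← Polynomial.sum_monomial_eq f]
  rw [show Psi k f = f.sum fun i g => (Wq k) ^ i * Polynomial.aeval (Wp k) g from rfl,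
    Polynomial.sum_def, Polynomial.sum_def, map_sum, LinearMap.sum_apply]
  exact Finset.sum_congr rfl fun i _ => wrep_one_monomial k i _

lemma psi_injective : Function.Injective (Psi k) := by
  intro f g h
  have hf := wrep_one_psi k f
  have hg := wrep_one_psi k g
  rw [h, hg] at hf
  exact hf.symm

/-! ### antiderivatives, surjectivity of ad q -/

def antider (g : Polynomial k) : Polynomial k :=
  g.sum fun j a => Polynomial.C (a / (j + 1)) * Polynomial.X ^ (j + 1)

lemma deriv_antider (g : Polynomial k) : Polynomial.derivative (antider k g) = g := by
  rw [antider, Polynomial.sum_def, map_sum]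
  conv_rhs => rw [← Polynomial.sum_C_mul_X_pow_eq g, Polynomial.sum_def]
  refine Finset.sum_congr rfl fun j _ => ?_
  rw [Polynomial.derivative_C_mul_X_pow]
  have hne : ((j : k) + 1) ≠ 0 := Nat.cast_add_one_ne_zero j
  have hj : (j + 1 : ℕ) - 1 = j := by omega
  have hc : g.coeff j / ((j : k) + 1) * ((j + 1 : ℕ) : k) = g.coeff j := by
    push_cast
    exact div_mul_cancel₀ _ hne
  rw [hj, hc]

def antiY (f : WP k) : WP k := f.sum fun i g => Polynomial.monomial i (antider k g)

lemma dY_antiY (f : WP k) : dY k (antiY k f) = f := by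
  rw [antiY, Polynomial.sum_def, map_sum]
  conv_rhs => rw [← Polynomial.sum_monomial_eq f, Polynomial.sum_def]
  refine Finset.sum_congr rfl fun i _ => ?_
  rw [dY_monomial, deriv_antider]

lemma adq_surjective (u : Weyl k) : ∃ x, Wq k * x - x * Wq k = u := by
  obtain ⟨f, rfl⟩ := psi_surjective k u
  exact ⟨Psi k (antiY k f), by rw [wq_comm_psi, dY_antiY]⟩

/-! ### the centralizer of q consists of polynomials in q -/

lemma centralizer_q (v : Weyl k) (hv : Wq k * v = v * Wq k) :
    v ∈ Submodule.span k (Set.range fun i : ℕ => (Wq k) ^ i) := by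
  obtain ⟨f, rfl⟩ := psi_surjective k v
  have h0 : Psi k (dY k f) = 0 := by rw [← wq_comm_psi, hv, sub_self]
  have hdY : dY k f = 0 := by
    apply psi_injective k
    rw [h0, map_zero]
  have hconst : ∀ n, ∃ c : k, f.coeff n = Polynomial.C c := by
    intro n
    have hd : Polynomial.derivative (f.coeff n) = 0 := by rw [← coeff_dY, hdY]; simp
    exact ⟨_, Polynomial.eq_C_of_natDegree_eq_zero
      (Polynomial.natDegree_eq_zero_of_derivative_eq_zero hd)⟩
  show Psi k f ∈ _
  rw [show Psi k f = f.sum fun i g => (Wq k) ^ i * Polynomial.aeval (Wp k) g from rfl,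
    Polynomial.sum_def]
  apply Submodule.sum_mem
  intro i _
  obtain ⟨c, hc⟩ := hconst i
  rw [hc, Polynomial.aeval_C,
    show (Wq k) ^ i * algebraMap k (Weyl k) c = c • (Wq k) ^ i by
      rw [← Algebra.commutes, Algebra.smul_def]]
  exact Submodule.smul_mem _ _ (Submodule.subset_span ⟨i, rfl⟩)

/-! ### polynomials in q are in the image of ad applied to polynomials in q -/

lemma polyq_adp (v : Weyl k)
    (hv : v ∈ Submodule.span k (Set.range fun i : ℕ => (Wq k) ^ i)) :
    ∃ y : Weyl k, y * Wq k = Wq k * y ∧ y * Wp k - Wp k * y = v := by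
  induction hv using Submodule.span_induction with
  | mem x hx =>
      obtain ⟨i, rfl⟩ := hx
      refine ⟨((i : k) + 1)⁻¹ • (Wq k) ^ (i + 1), ?_, ?_⟩
      · rw [smul_mul_assoc, mul_smul_comm, ← pow_succ, ← pow_succ']
      · have h1 : (Wq k) ^ (i + 1) * Wp k - Wp k * (Wq k) ^ (i + 1)
            = ((i : k) + 1) • (Wq k) ^ i := by
          have := aeval_wq_mul_wp k (Polynomial.X ^ (i + 1))
          rw [map_pow, Polynomial.aeval_X, Polynomial.derivative_X_pow] at this
          rw [this]
          have hj : (i + 1 : ℕ) - 1 = i := by omega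
          rw [hj, map_mul, Polynomial.aeval_C, map_pow, Polynomial.aeval_X,
            ← Algebra.smul_def]
          push_cast
          noncomm_ring
        rw [smul_mul_assoc, mul_smul_comm,
          show ((i : k) + 1)⁻¹ • ((Wq k) ^ (i + 1) * Wp k)
              - ((i : k) + 1)⁻¹ • (Wp k * (Wq k) ^ (i + 1))
            = ((i : k) + 1)⁻¹ • ((Wq k) ^ (i + 1) * Wp k - Wp k * (Wq k) ^ (i + 1)) by
            rw [smul_sub],
          h1, smul_smul, inv_mul_cancel₀ (Nat.cast_add_one_ne_zero i), one_smul]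
  | zero => exact ⟨0, by simp⟩
  | add x y hx hy ihx ihy =>
      obtain ⟨y₁, hy₁, hy₁'⟩ := ihx
      obtain ⟨y₂, hy₂, hy₂'⟩ := ihy
      exact ⟨y₁ + y₂, by rw [add_mul, mul_add, hy₁, hy₂],
        by rw [add_mul, mul_add, ← hy₁', ← hy₂']; noncomm_ring⟩
  | smul c x hx ihx =>
      obtain ⟨y, hy, hy'⟩ := ihx
      exact ⟨c • y, by rw [smul_mul_assoc, mul_smul_comm, hy],
        by rw [smul_mul_assoc, mul_smul_comm,
          show c • (y * Wp k) - c • (Wp k * y) = c • (y * Wp k - Wp k * y) by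
            rw [smul_sub], hy']⟩


end WeylAux

theorem weyl_derivation_inner (k : Type*) [Field k] [CharZero k]
    (D : Weyl k →ₗ[k] Weyl k)
    (hLeibniz : ∀ a b : Weyl k, D (a * b) = D a * b + a * D b) :
    ∃ x : Weyl k, ∀ a : Weyl k, D a = x * a - a * x := by
  have hD1 : D 1 = 0 := by
    have h := hLeibniz 1 1
    rw [mul_one, mul_one, one_mul] at h
    exact left_eq_add.mp h
  obtain ⟨x₁, hx₁⟩ := adq_surjective k (-(D (Wq k)))
  have hDq : D (Wq k) = x₁ * Wq k - Wq k * x₁ := by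
    rw [← neg_neg (D (Wq k)), ← hx₁, neg_sub]
  set v := D (Wp k) - (x₁ * Wp k - Wp k * x₁) with hv
  have hqp : D (Wq k) * Wp k + Wq k * D (Wp k) = D (Wp k) * Wq k + Wp k * D (Wq k) := by
    rw [← hLeibniz, ← hLeibniz, weyl_rel, map_add, hD1, add_zero]
  have hqv : Wq k * v = v * Wq k := by
    have key : Wq k * v - v * Wq k
        = ((D (Wq k) * Wp k + Wq k * D (Wp k))
            - (D (Wp k) * Wq k + Wp k * D (Wq k)))
          + ((Wq k * Wp k) * x₁ - x₁ * (Wq k * Wp k))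
          - ((Wp k * Wq k) * x₁ - x₁ * (Wp k * Wq k)) := by
      rw [hv, hDq]
      simp only [mul_sub, sub_mul, mul_add, add_mul, mul_assoc]
      abel
    rw [hqp, sub_self, zero_add, weyl_rel] at key
    have key2 : Wq k * v - v * Wq k = 0 := by
      rw [key]
      simp only [mul_sub, sub_mul, mul_add, add_mul, mul_assoc, one_mul, mul_one]
      abel
    exact sub_eq_zero.mp key2
  obtain ⟨y, hyq, hyp⟩ := polyq_adp k v (centralizer_q k v hqv)
  refine ⟨x₁ + y, weyl_induction k ?_ ?_ ?_ ?_ ?_⟩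
  · intro c
    rw [Algebra.algebraMap_eq_smul_one, map_smul, hD1, smul_zero]
    rw [show (x₁ + y) * (c • (1 : Weyl k)) = c • (x₁ + y) by
        rw [mul_smul_comm, mul_one],
      show (c • (1 : Weyl k)) * (x₁ + y) = c • (x₁ + y) by
        rw [smul_mul_assoc, one_mul],
      sub_self]
  · rw [hDq, add_mul, mul_add, hyq]
    noncomm_ring
  · have hyp' : y * Wp k - Wp k * y = D (Wp k) - (x₁ * Wp k - Wp k * x₁) := hyp
    have : (x₁ + y) * Wp k - Wp k * (x₁ + y)
        = (x₁ * Wp k - Wp k * x₁) + (y * Wp k - Wp k * y) := by noncomm_ring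
    rw [this, hyp']
    noncomm_ring
  · intro a b ha hb
    rw [map_add, ha, hb]
    noncomm_ring
  · intro a b ha hb
    rw [hLeibniz a b, ha, hb]
    simp only [mul_sub, sub_mul, mul_add, add_mul, mul_assoc]
    abel
end

section
/- The supertrace Str : A₁ → k defined on the Weyl algebra by Str(f) = f(0) (the constant term in the symmetric/Weyl-ordered basis) vanishes on all κ-twisted commutators: Str(ab − b·κ(a)) = 0 for all a, b ∈ A₁, where κ is the automorphism sending q ↦ −q, p ↦ −p. -/
open scoped BigOperators

/-- the ordered word in `q`'s and `p`'s determined by `w` (`true` ↦ `q`). -/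
noncomputable def weylWord (k : Type*) [CommRing k] {N : ℕ} (w : Fin N → Bool) : Weyl k :=
  (List.ofFn (fun i => if w i then Wq k else Wp k)).prod

/-- the (unnormalized) Weyl-symmetrized monomial with `n` letters `q` and
`m` letters `p`: the sum over all orderings. -/
noncomputable def symMonomial (k : Type*) [CommRing k] (n m : ℕ) : Weyl k :=
  ∑ w : Fin (n + m) → Bool,
    if (Finset.univ.filter fun i => w i = true).card = n then weylWord k w else 0

namespace WeylAux
variable {k : Type*} [CommRing k]

noncomputable def g (k : Type*) [CommRing k] (c : Bool) : Weyl k := if c then Wq k else Wp k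

/-- commutator constant -/
noncomputable def eps (k : Type*) [CommRing k] (c a : Bool) : Weyl k :=
  if c = a then 0 else if c then 1 else -1

lemma weyl_rel : Wq k * Wp k = Wp k * Wq k + 1 := by
  have h := RingQuot.mkRingHom_rel (WeylRel.qp (k := k))
  simpa [Wq, Wp, map_mul, map_add, map_one] using h

lemma g_comm (c a : Bool) : g k c * g k a = g k a * g k c + eps k c a := by
  cases c <;> cases a <;> simp [g, eps, weyl_rel]

lemma weylWord_def {N : ℕ} (w : Fin N → Bool) :
    weylWord k w = (List.ofFn (fun i => g k (w i))).prod := rfl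

lemma weylWord_nil (w : Fin 0 → Bool) : weylWord k w = 1 := by
  simp [weylWord_def]

lemma weylWord_cons {N : ℕ} (c : Bool) (w : Fin N → Bool) :
    weylWord k (Fin.cons c w) = g k c * weylWord k w := by
  simp [weylWord_def, List.ofFn_succ]

lemma weylWord_snoc {N : ℕ} (c : Bool) (w : Fin N → Bool) :
    weylWord k (Fin.snoc w c) = weylWord k w * g k c := by
  rw [weylWord_def, List.ofFn_succ']
  simp [weylWord_def]

end WeylAux

namespace WeylAux2
variable {α : Type*}

lemma insertNth_succ_cons {N : ℕ} (j : Fin (N + 1)) (x a : α) (w : Fin N → α) :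
    Fin.insertNth (α := fun _ => α) j.succ x (Fin.cons a w) =
      Fin.cons a (Fin.insertNth (α := fun _ => α) j x w) := by
  ext i
  refine Fin.succAboveCases j.succ ?_ ?_ i
  · simp [Fin.insertNth_apply_same]
  · intro l
    rw [Fin.insertNth_apply_succAbove]
    refine Fin.cases ?_ ?_ l
    · simp
    · intro l'
      rw [Fin.succ_succAbove_succ, Fin.cons_succ, Fin.cons_succ,
        Fin.insertNth_apply_succAbove]

lemma removeNth_succ_cons {N : ℕ} (j : Fin (N + 1)) (a : α) (w : Fin (N + 1) → α) :
    Fin.removeNth (α := fun _ => α) j.succ (Fin.cons a w) =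
      Fin.cons a (Fin.removeNth (α := fun _ => α) j w) := by
  ext i
  refine Fin.cases ?_ ?_ i
  · simp [Fin.removeNth]
  · intro l
    simp [Fin.removeNth, Fin.succ_succAbove_succ]

end WeylAux2

namespace WeylAux
open WeylAux2
variable {k : Type*} [CommRing k]

lemma aux_neg_one_comm {R : Type*} [Ring R] (y : R) : -1 * y = y * -1 := by
  rw [neg_one_mul, mul_neg_one]

lemma eps_mul_comm (c a : Bool) (y : Weyl k) : eps k c a * y = y * eps k c a := by
  cases c <;> cases a <;> simp only [eps, reduceIte, Bool.true_eq_false, Bool.false_eq_true]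
  · rw [zero_mul, mul_zero]
  · exact aux_neg_one_comm y
  · rw [one_mul, mul_one]
  · rw [zero_mul, mul_zero]

lemma word_insert_adj {M : ℕ} (c : Bool) (j : Fin (M + 1)) (w : Fin (M + 1) → Bool) :
    weylWord k (Fin.insertNth (α := fun _ => Bool) j.castSucc c w) =
      weylWord k (Fin.insertNth (α := fun _ => Bool) j.succ c w) +
        eps k c (w j) * weylWord k (Fin.removeNth (α := fun _ => Bool) j w) := by
  induction M with
  | zero =>
    refine Fin.cases ?_ (fun j' => j'.elim0) j
    have hw : w = Fin.cons (w 0) (Fin.tail w) := (Fin.cons_self_tail w).symm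
    rw [hw]
    rw [Fin.castSucc_zero, Fin.insertNth_zero', insertNth_succ_cons,
      Fin.insertNth_zero', Fin.removeNth_zero]
    simp only [Fin.cons_zero, Fin.tail_cons]
    rw [weylWord_cons, weylWord_cons, weylWord_cons, weylWord_cons]
    rw [← mul_assoc, ← mul_assoc, g_comm]
    rw [add_mul]
  | succ M IH =>
    refine Fin.cases ?_ ?_ j
    · have hw : w = Fin.cons (w 0) (Fin.tail w) := (Fin.cons_self_tail w).symm
      rw [hw]
      rw [Fin.castSucc_zero, Fin.insertNth_zero', insertNth_succ_cons,
        Fin.insertNth_zero', Fin.removeNth_zero]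
      simp only [Fin.cons_zero, Fin.tail_cons]
      rw [weylWord_cons, weylWord_cons, weylWord_cons, weylWord_cons]
      rw [← mul_assoc, ← mul_assoc, g_comm]
      rw [add_mul]
    · intro j'
      have hw : w = Fin.cons (w 0) (Fin.tail w) := (Fin.cons_self_tail w).symm
      rw [hw]
      rw [← Fin.succ_castSucc, insertNth_succ_cons, insertNth_succ_cons,
        removeNth_succ_cons, Fin.cons_succ]
      rw [weylWord_cons, weylWord_cons, weylWord_cons, IH]
      rw [mul_add, ← mul_assoc, ← eps_mul_comm, mul_assoc]

end WeylAux

namespace WeylAux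
open WeylAux2
variable {k : Type*} [CommRing k]

/-- number of `true`s -/
def cnt {N : ℕ} (w : Fin N → Bool) : ℕ := (Finset.univ.filter fun i => w i = true).card

lemma cnt_eq_sum {N : ℕ} (w : Fin N → Bool) :
    cnt w = ∑ i, (if w i = true then 1 else 0) := Finset.card_filter _ _

lemma cnt_insertNth {M : ℕ} (j : Fin (M + 1)) (a : Bool) (v : Fin M → Bool) :
    cnt (Fin.insertNth (α := fun _ => Bool) j a v) = (if a then 1 else 0) + cnt v := by
  rw [cnt_eq_sum, Fin.sum_univ_succAbove _ j, cnt_eq_sum]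
  simp [Fin.insertNth_apply_same, Fin.insertNth_apply_succAbove]

lemma cnt_le {N : ℕ} (w : Fin N → Bool) : cnt w ≤ N := by
  simpa [cnt] using (Finset.card_filter_le Finset.univ (fun i => w i = true)).trans
    (le_of_eq (by simp))

lemma symMonomial_def (n m : ℕ) :
    symMonomial k n m = ∑ w : Fin (n + m) → Bool, if cnt w = n then weylWord k w else 0 := rfl

lemma symM_cast (n m J : ℕ) (h : n + m = J) :
    symMonomial k n m = ∑ w : Fin J → Bool, if cnt w = n then weylWord k w else 0 := by
  subst h; rfl

/-- the sum of all `(n, insert c at j)`-words -/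
noncomputable def TT (k : Type*) [CommRing k] (c : Bool) (n M : ℕ) (j : Fin (M + 1)) : Weyl k :=
  ∑ w : Fin M → Bool,
    if cnt w = n then weylWord k (Fin.insertNth (α := fun _ => Bool) j c w) else 0

lemma TA (c : Bool) (n M : ℕ) :
    TT k c n M 0 = g k c * ∑ w : Fin M → Bool, (if cnt w = n then weylWord k w else 0) := by
  rw [TT, Finset.mul_sum]
  refine Finset.sum_congr rfl fun w _ => ?_
  split_ifs
  · rw [Fin.insertNth_zero', weylWord_cons]
  · rw [mul_zero]

lemma TB (c : Bool) (n M : ℕ) :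
    TT k c n M (Fin.last M)
      = (∑ w : Fin M → Bool, (if cnt w = n then weylWord k w else 0)) * g k c := by
  rw [TT, Finset.sum_mul]
  refine Finset.sum_congr rfl fun w _ => ?_
  split_ifs
  · rw [Fin.insertNth_last', weylWord_snoc]
  · rw [zero_mul]

lemma TCq (n M : ℕ) (j : Fin (M + 1)) :
    TT k true n (M + 1) j.castSucc
      = TT k true n (M + 1) j.succ
        + ∑ v : Fin M → Bool, (if cnt v = n then weylWord k v else 0) := by
  rw [TT, TT]
  have h1 : ∀ w : Fin (M + 1) → Bool,
      (if cnt w = n then weylWord k (Fin.insertNth (α := fun _ => Bool) j.castSucc true w) else 0)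
      = (if cnt w = n then weylWord k (Fin.insertNth (α := fun _ => Bool) j.succ true w) else 0)
        + (if cnt w = n then
            eps k true (w j) * weylWord k (Fin.removeNth (α := fun _ => Bool) j w) else 0) := by
    intro w
    split_ifs
    · exact word_insert_adj true j w
    · rw [add_zero]
  rw [Finset.sum_congr rfl fun w _ => h1 w, Finset.sum_add_distrib]
  congr 1
  rw [← Fintype.sum_equiv (Fin.insertNthEquiv (fun _ => Bool) j)
    (fun p => if cnt (Fin.insertNth (α := fun _ => Bool) j p.1 p.2) = n then
        eps k true (Fin.insertNth (α := fun _ => Bool) j p.1 p.2 j)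
          * weylWord k (Fin.removeNth (α := fun _ => Bool) j
              (Fin.insertNth (α := fun _ => Bool) j p.1 p.2)) else 0)
    _ (fun p => rfl)]
  rw [Fintype.sum_prod_type, Fintype.sum_bool]
  have htrue : ∀ v : Fin M → Bool,
      (if cnt (Fin.insertNth (α := fun _ => Bool) j true v) = n then
        eps k true (Fin.insertNth (α := fun _ => Bool) j true v j)
          * weylWord k (Fin.removeNth (α := fun _ => Bool) j
              (Fin.insertNth (α := fun _ => Bool) j true v)) else 0) = 0 := by
    intro v
    rw [Fin.insertNth_apply_same]
    split_ifs
    · show eps k true true * _ = 0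
      rw [eps]; simp
    · rfl
  rw [Finset.sum_congr rfl fun v _ => htrue v, Finset.sum_const_zero, zero_add]
  refine Finset.sum_congr rfl fun v _ => ?_
  rw [Fin.insertNth_apply_same, Fin.removeNth_insertNth, cnt_insertNth]
  have : eps k true false = 1 := by rw [eps]; simp
  rw [this, one_mul]
  simp

lemma aux_neg_one_add {R : Type*} [Ring R] (x : R) : -1 * x + x = 0 := by
  rw [neg_one_mul, neg_add_cancel]

lemma eps_ft_add (x : Weyl k) : eps k false true * x + x = 0 := by
  have h : eps k false true = -1 := by rw [eps]; simp
  rw [h]; exact aux_neg_one_add x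

lemma TCp (n M : ℕ) (j : Fin (M + 1)) :
    TT k false n (M + 1) j.castSucc
        + ∑ v : Fin M → Bool, (if cnt v + 1 = n then weylWord k v else 0)
      = TT k false n (M + 1) j.succ := by
  rw [TT, TT]
  have h1 : ∀ w : Fin (M + 1) → Bool,
      (if cnt w = n then weylWord k (Fin.insertNth (α := fun _ => Bool) j.castSucc false w) else 0)
      = (if cnt w = n then weylWord k (Fin.insertNth (α := fun _ => Bool) j.succ false w) else 0)
        + (if cnt w = n then
            eps k false (w j) * weylWord k (Fin.removeNth (α := fun _ => Bool) j w) else 0) := by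
    intro w
    split_ifs
    · exact word_insert_adj false j w
    · rw [add_zero]
  rw [Finset.sum_congr rfl fun w _ => h1 w, Finset.sum_add_distrib]
  have h2 : ∑ w : Fin (M + 1) → Bool,
      (if cnt w = n then
        eps k false (w j) * weylWord k (Fin.removeNth (α := fun _ => Bool) j w) else 0)
      = ∑ v : Fin M → Bool, (if cnt v + 1 = n then eps k false true * weylWord k v else 0) := by
    rw [← Fintype.sum_equiv (Fin.insertNthEquiv (fun _ => Bool) j)
      (fun p => if cnt (Fin.insertNth (α := fun _ => Bool) j p.1 p.2) = n then
          eps k false (Fin.insertNth (α := fun _ => Bool) j p.1 p.2 j)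
            * weylWord k (Fin.removeNth (α := fun _ => Bool) j
                (Fin.insertNth (α := fun _ => Bool) j p.1 p.2)) else 0)
      _ (fun p => rfl)]
    rw [Fintype.sum_prod_type, Fintype.sum_bool]
    have hfalse : ∀ v : Fin M → Bool,
        (if cnt (Fin.insertNth (α := fun _ => Bool) j false v) = n then
          eps k false (Fin.insertNth (α := fun _ => Bool) j false v j)
            * weylWord k (Fin.removeNth (α := fun _ => Bool) j
                (Fin.insertNth (α := fun _ => Bool) j false v)) else 0) = 0 := by
      intro v
      rw [Fin.insertNth_apply_same]
      split_ifs
      · show eps k false false * _ = 0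
        rw [eps]; simp
      · rfl
    rw [Finset.sum_congr rfl fun v _ => hfalse v, Finset.sum_const_zero, add_zero]
    refine Finset.sum_congr rfl fun v _ => ?_
    rw [Fin.insertNth_apply_same, Fin.removeNth_insertNth, cnt_insertNth]
    have : (if true then 1 else 0) + cnt v = cnt v + 1 := by simp [Nat.add_comm]
    rw [this]
  rw [h2, add_assoc, ← Finset.sum_add_distrib]
  have h3 : ∀ v : Fin M → Bool,
      ((if cnt v + 1 = n then eps k false true * weylWord k v else 0)
        + if cnt v + 1 = n then weylWord k v else 0) = 0 := by
    intro v
    split_ifs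
    · exact eps_ft_add _
    · rw [add_zero]
  rw [Finset.sum_congr rfl fun v _ => h3 v, Finset.sum_const_zero, add_zero]

lemma TDq (n M : ℕ) :
    ∑ j : Fin (M + 1), TT k true n M j
      = (n + 1) • ∑ u : Fin (M + 1) → Bool, (if cnt u = n + 1 then weylWord k u else 0) := by
  have h1 : ∀ j : Fin (M + 1), TT k true n M j
      = ∑ u : Fin (M + 1) → Bool,
          (if u j = true ∧ cnt u = n + 1 then weylWord k u else 0) := by
    intro j
    rw [← Fintype.sum_equiv (Fin.insertNthEquiv (fun _ => Bool) j)
      (fun p => if Fin.insertNth (α := fun _ => Bool) j p.1 p.2 j = true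
            ∧ cnt (Fin.insertNth (α := fun _ => Bool) j p.1 p.2) = n + 1 then
          weylWord k (Fin.insertNth (α := fun _ => Bool) j p.1 p.2) else 0)
      _ (fun p => rfl)]
    rw [Fintype.sum_prod_type, Fintype.sum_bool, TT]
    have hfalse : ∀ v : Fin M → Bool,
        (if Fin.insertNth (α := fun _ => Bool) j false v j = true
            ∧ cnt (Fin.insertNth (α := fun _ => Bool) j false v) = n + 1 then
          weylWord k (Fin.insertNth (α := fun _ => Bool) j false v) else 0) = 0 := by
      intro v
      rw [Fin.insertNth_apply_same]
      simp
    rw [Finset.sum_congr rfl fun v _ => hfalse v, Finset.sum_const_zero, add_zero]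
    refine Finset.sum_congr rfl fun v _ => ?_
    rw [Fin.insertNth_apply_same, cnt_insertNth]
    have hc : ((if true then 1 else 0) + cnt v = n + 1) ↔ (cnt v = n) := by
      simp only [if_true]
      omega
    by_cases hv : cnt v = n
    · rw [if_pos hv, if_pos ⟨rfl, hc.2 hv⟩]
    · rw [if_neg hv, if_neg (by rintro ⟨-, h⟩; exact hv (hc.1 h))]
  rw [Finset.sum_congr rfl fun j _ => h1 j, Finset.sum_comm, Finset.smul_sum]
  refine Finset.sum_congr rfl fun u _ => ?_
  by_cases hu : cnt u = n + 1
  · have : ∀ j : Fin (M + 1), (if u j = true ∧ cnt u = n + 1 then weylWord k u else 0)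
        = (if u j = true then weylWord k u else 0) := by
      intro j; by_cases h : u j = true <;> simp [h, hu]
    rw [Finset.sum_congr rfl fun j _ => this j, Finset.sum_ite, Finset.sum_const,
      Finset.sum_const_zero, add_zero, if_pos hu]
    show (Finset.univ.filter fun j => u j = true).card • weylWord k u = _
    rw [show (Finset.univ.filter fun j => u j = true).card = n + 1 from hu]
  · have : ∀ j : Fin (M + 1), (if u j = true ∧ cnt u = n + 1 then weylWord k u else 0)
        = 0 := by
      intro j; simp [hu]
    rw [Finset.sum_congr rfl fun j _ => this j, Finset.sum_const_zero, if_neg hu, smul_zero]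

lemma TDp (n M : ℕ) :
    ∑ j : Fin (M + 1), TT k false n M j
      = (M + 1 - n) • ∑ u : Fin (M + 1) → Bool, (if cnt u = n then weylWord k u else 0) := by
  have h1 : ∀ j : Fin (M + 1), TT k false n M j
      = ∑ u : Fin (M + 1) → Bool,
          (if u j = false ∧ cnt u = n then weylWord k u else 0) := by
    intro j
    rw [← Fintype.sum_equiv (Fin.insertNthEquiv (fun _ => Bool) j)
      (fun p => if Fin.insertNth (α := fun _ => Bool) j p.1 p.2 j = false
            ∧ cnt (Fin.insertNth (α := fun _ => Bool) j p.1 p.2) = n then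
          weylWord k (Fin.insertNth (α := fun _ => Bool) j p.1 p.2) else 0)
      _ (fun p => rfl)]
    rw [Fintype.sum_prod_type, Fintype.sum_bool, TT]
    have htrue : ∀ v : Fin M → Bool,
        (if Fin.insertNth (α := fun _ => Bool) j true v j = false
            ∧ cnt (Fin.insertNth (α := fun _ => Bool) j true v) = n then
          weylWord k (Fin.insertNth (α := fun _ => Bool) j true v) else 0) = 0 := by
      intro v
      rw [Fin.insertNth_apply_same]
      simp
    rw [Finset.sum_congr rfl fun v _ => htrue v, Finset.sum_const_zero, zero_add]
    refine Finset.sum_congr rfl fun v _ => ?_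
    rw [Fin.insertNth_apply_same, cnt_insertNth]
    have hc : ((if false then 1 else 0) + cnt v = n) ↔ (cnt v = n) := by
      simp
    by_cases hv : cnt v = n
    · rw [if_pos hv, if_pos ⟨rfl, hc.2 hv⟩]
    · rw [if_neg hv, if_neg (by rintro ⟨-, h⟩; exact hv (hc.1 h))]
  rw [Finset.sum_congr rfl fun j _ => h1 j, Finset.sum_comm, Finset.smul_sum]
  refine Finset.sum_congr rfl fun u _ => ?_
  by_cases hu : cnt u = n
  · have : ∀ j : Fin (M + 1), (if u j = false ∧ cnt u = n then weylWord k u else 0)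
        = (if u j = false then weylWord k u else 0) := by
      intro j; by_cases h : u j = false <;> simp [h, hu]
    rw [Finset.sum_congr rfl fun j _ => this j, Finset.sum_ite, Finset.sum_const,
      Finset.sum_const_zero, add_zero, if_pos hu]
    have hcard : (Finset.univ.filter fun j => u j = false).card = M + 1 - n := by
      have hsplit := Finset.card_filter_add_card_filter_not
        (s := (Finset.univ : Finset (Fin (M + 1)))) (p := fun j => u j = true)
      have hcongr : (Finset.univ.filter fun j => ¬(u j = true))
          = (Finset.univ.filter fun j => u j = false) := by
        refine Finset.filter_congr ?_
        intro x _; simp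
      rw [hcongr] at hsplit
      have : cnt u = n := hu
      rw [cnt] at this
      simp only [Finset.card_univ, Fintype.card_fin] at hsplit
      omega
    rw [hcard]
  · have : ∀ j : Fin (M + 1), (if u j = false ∧ cnt u = n then weylWord k u else 0)
        = 0 := by
      intro j; simp [hu]
    rw [Finset.sum_congr rfl fun j _ => this j, Finset.sum_const_zero, if_neg hu, smul_zero]

lemma telescope_down {G : Type*} [AddCommGroup G] {N : ℕ} (T : Fin (N + 1) → G) (D : G)
    (h : ∀ j : Fin N, T j.castSucc = T j.succ + D) :
    (N + 1) • (T 0 + T (Fin.last N)) = 2 • ∑ j, T j := by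
  have key : ∀ j : Fin (N + 1), T j + (j : ℕ) • D = T 0 := by
    intro j
    induction j using Fin.induction with
    | zero => simp
    | succ i ih =>
      rw [Fin.val_succ, succ_nsmul]
      calc T i.succ + ((i : ℕ) • D + D) = (T i.succ + D) + (i : ℕ) • D := by abel
        _ = T i.castSucc + ((i.castSucc : ℕ)) • D := by rw [← h i, Fin.coe_castSucc]
        _ = T 0 := ih
  have hsum : (∑ j, T j) + (∑ j : Fin (N + 1), (j : ℕ)) • D = (N + 1) • T 0 := by
    rw [Finset.sum_smul, ← Finset.sum_add_distrib,
      Finset.sum_congr rfl fun j _ => key j, Finset.sum_const, Finset.card_univ,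
      Fintype.card_fin]
  have hlast : T (Fin.last N) + N • D = T 0 := by
    have := key (Fin.last N)
    rwa [Fin.val_last] at this
  have hgauss : (∑ j : Fin (N + 1), (j : ℕ)) * 2 = (N + 1) * N := by
    rw [Fin.sum_univ_eq_sum_range (fun i => i) (N + 1), Finset.sum_range_id_mul_two]
    simp
  apply add_right_cancel (b := ((N + 1) * N) • D)
  have lhs : (N + 1) • (T 0 + T (Fin.last N)) + ((N + 1) * N) • D = 2 • ((N + 1) • T 0) := by
    rw [mul_smul, ← smul_add, add_assoc, hlast, ← two_nsmul, ← smul_comm]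
  have rhs : (2 • ∑ j, T j) + ((N + 1) * N) • D = 2 • ((N + 1) • T 0) := by
    rw [← hgauss, mul_comm, mul_smul, ← smul_add, hsum]
  rw [lhs, rhs]

lemma telescope_up {G : Type*} [AddCommGroup G] {N : ℕ} (T : Fin (N + 1) → G) (D : G)
    (h : ∀ j : Fin N, T j.castSucc + D = T j.succ) :
    (N + 1) • (T 0 + T (Fin.last N)) = 2 • ∑ j, T j := by
  refine telescope_down T (-D) (fun j => ?_)
  rw [← h j]; abel

lemma keyQ (n m : ℕ) :
    (n + m + 1) • (Wq k * symMonomial k n m + symMonomial k n m * Wq k)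
      = 2 • ((n + 1) • symMonomial k (n + 1) m) := by
  have hq : g k true = Wq k := rfl
  cases m with
  | succ m' =>
    have htel := telescope_down (TT k true n (n + (m' + 1))) (symMonomial k n m')
      (fun j => by rw [symMonomial_def]; exact TCq n (n + m') j)
    rw [TA, TB, hq, ← symMonomial_def, TDq,
      ← symM_cast (n + 1) (m' + 1) (n + (m' + 1) + 1) (by omega)] at htel
    exact htel
  | zero =>
    have hC : ∀ j : Fin (n + 0), TT k true n (n + 0) j.castSucc
        = TT k true n (n + 0) j.succ + 0 := by
      intro j
      cases n with
      | zero => exact j.elim0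
      | succ n' =>
        have hS : (∑ v : Fin n' → Bool, if cnt v = n' + 1 then weylWord k v else 0)
            = 0 := Finset.sum_eq_zero fun v _ => if_neg (by have := cnt_le v; omega)
        exact (TCq (n' + 1) n' j).trans (by rw [hS])
    have htel := telescope_down (TT k true n (n + 0)) 0 hC
    rw [TA, TB, hq, ← symMonomial_def] at htel
    rw [TDq n (n + 0), ← symM_cast (n + 1) 0 (n + 0 + 1) (by omega)] at htel
    exact htel

lemma keyP (n m : ℕ) :
    (n + m + 1) • (Wp k * symMonomial k n m + symMonomial k n m * Wp k)
      = 2 • ((m + 1) • symMonomial k n (m + 1)) := by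
  have hp : g k false = Wp k := rfl
  have hco : ∀ m : ℕ, n + m + 1 - n = m + 1 := fun m => by omega
  cases m with
  | succ m' =>
    have htel := telescope_up (TT k false n (n + (m' + 1)))
      (∑ v : Fin (n + m') → Bool, if cnt v + 1 = n then weylWord k v else 0)
      (fun j => TCp n (n + m') j)
    rw [TA, TB, hp, ← symMonomial_def, TDp, hco (m' + 1),
      ← symM_cast n (m' + 1 + 1) (n + (m' + 1) + 1) (by omega)] at htel
    exact htel
  | zero =>
    cases n with
    | zero =>
      have htel := telescope_up (TT k false 0 (0 + 0)) 0 (fun j => j.elim0)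
      rw [TA, TB, hp, ← symMonomial_def, TDp, hco 0,
        ← symM_cast 0 (0 + 1) (0 + 0 + 1) (by omega)] at htel
      exact htel
    | succ n' =>
      have htel := telescope_up (TT k false (n' + 1) (n' + 1 + 0))
        (∑ v : Fin n' → Bool, if cnt v + 1 = n' + 1 then weylWord k v else 0)
        (fun j => TCp (n' + 1) n' j)
      rw [TA, TB, hp, ← symMonomial_def, TDp, hco 0,
        ← symM_cast (n' + 1) (0 + 1) (n' + 1 + 0 + 1) (by omega)] at htel
      exact htel

end WeylAux

namespace WeylAux
open WeylAux2
variable {k : Type*} [CommRing k]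

/-- word product at the list level -/
noncomputable def wd (k : Type*) [CommRing k] (l : List Bool) : Weyl k :=
  (l.map (g k)).prod

lemma weylWord_eq_wd {N : ℕ} (w : Fin N → Bool) : weylWord k w = wd k (List.ofFn w) := by
  rw [weylWord_def, wd, List.map_ofFn]
  rfl

lemma wd_nil : wd k [] = 1 := rfl

lemma wd_cons (c : Bool) (l : List Bool) : wd k (c :: l) = g k c * wd k l := by
  rw [wd, wd, List.map_cons, List.prod_cons]

lemma wd_append (l r : List Bool) : wd k (l ++ r) = wd k l * wd k r := by
  rw [wd, wd, wd, List.map_append, List.prod_append]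

lemma wd_swap (l r : List Bool) :
    wd k (l ++ true :: false :: r) = wd k (l ++ false :: true :: r) + wd k (l ++ r) := by
  rw [wd_append, wd_append, wd_append, wd_cons, wd_cons, wd_cons, wd_cons]
  have h : g k true * (g k false * wd k r)
      = g k false * (g k true * wd k r) + wd k r := by
    rw [← mul_assoc, ← mul_assoc]
    have hgc := g_comm (k := k) true false
    have heps : eps k true false = 1 := by rw [eps]; simp
    rw [heps] at hgc
    rw [hgc, add_mul, one_mul]
  rw [h, mul_add]

/-- number of `true`s in a list -/
def cntT (l : List Bool) : ℕ := l.count true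

lemma cntT_nil : cntT [] = 0 := rfl

lemma cntT_cons (c : Bool) (l : List Bool) :
    cntT (c :: l) = (if c then 1 else 0) + cntT l := by
  cases c <;> simp [cntT, List.count_cons] <;> omega

lemma cntT_append (l r : List Bool) : cntT (l ++ r) = cntT l + cntT r := by
  simp [cntT, List.count_append]

lemma cntT_le_length (l : List Bool) : cntT l ≤ l.length := List.count_le_length

lemma cntT_ofFn {N : ℕ} (w : Fin N → Bool) : cntT (List.ofFn w) = cnt w := by
  induction N with
  | zero =>
    have h : cnt w = 0 := by rw [cnt_eq_sum]; simp
    simp [h, cntT]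
  | succ N ih =>
    conv_rhs => rw [cnt_eq_sum, Fin.sum_univ_succ]
    rw [List.ofFn_succ, cntT_cons, ih (fun i => w i.succ), cnt_eq_sum]

/-- inversions -/
def invL : List Bool → ℕ
  | [] => 0
  | (true :: t) => invL t
  | (false :: t) => cntT t + invL t

lemma inv_swap (l r : List Bool) :
    invL (l ++ true :: false :: r) + 1 = invL (l ++ false :: true :: r) := by
  induction l with
  | nil =>
    show invL (false :: r) + 1 = cntT (true :: r) + invL (true :: r)
    show (cntT r + invL r) + 1 = cntT (true :: r) + invL r
    rw [cntT_cons]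
    simp
    omega
  | cons c t ih =>
    cases c
    · show (cntT (t ++ true :: false :: r) + invL (t ++ true :: false :: r)) + 1
        = cntT (t ++ false :: true :: r) + invL (t ++ false :: true :: r)
      have hc : cntT (t ++ true :: false :: r) = cntT (t ++ false :: true :: r) := by
        rw [cntT_append, cntT_append, cntT_cons, cntT_cons, cntT_cons, cntT_cons]
        omega
      omega
    · show invL (t ++ true :: false :: r) + 1 = invL (t ++ false :: true :: r)
      exact ih

/-- the sorted word `q^n p^m` -/
def sortedL (n m : ℕ) : List Bool := List.replicate n true ++ List.replicate m false

lemma descent_or_sorted (l : List Bool) :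
    l = sortedL (cntT l) (l.length - cntT l) ∨
      ∃ l₁ l₂ : List Bool, l = l₁ ++ false :: true :: l₂ := by
  induction l with
  | nil => left; rfl
  | cons c t ih =>
    rcases ih with hs | ⟨l₁, l₂, hd⟩
    · cases c
      · rcases hct : cntT t with _ | n'
        · left
          have h0 : cntT (false :: t) = 0 := by rw [cntT_cons, hct]; simp
          have h1 : t = List.replicate t.length false := by rw [hs, hct]; simp [sortedL]
          rw [h0]
          show false :: t = sortedL 0 (t.length + 1 - 0)
          rw [sortedL, List.replicate_zero, List.nil_append, Nat.sub_zero,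
            List.replicate_succ]
          exact congrArg (List.cons false) h1
        · right
          rw [hct] at hs
          refine ⟨[], List.replicate n' true
            ++ List.replicate (t.length - (n' + 1)) false, ?_⟩
          rw [hs]
          simp [sortedL, List.replicate_succ]
      · left
        have h0 : cntT (true :: t) = cntT t + 1 := by rw [cntT_cons]; simp [Nat.add_comm]
        rw [h0]
        have h2 : (true :: t).length - (cntT t + 1) = t.length - cntT t := by
          simp
        rw [h2, sortedL, List.replicate_succ, List.cons_append, ← sortedL, ← hs]
    · right
      exact ⟨c :: l₁, l₂, by rw [hd]; rfl⟩

/-- span of the symmetrized monomials -/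
noncomputable def SymS (k : Type*) [CommRing k] : Submodule k (Weyl k) :=
  Submodule.span k {x : Weyl k | ∃ n m, symMonomial k n m = x}

/-- span of the words -/
noncomputable def WS (k : Type*) [CommRing k] : Submodule k (Weyl k) :=
  Submodule.span k {x : Weyl k | ∃ N, ∃ w : Fin N → Bool, weylWord k w = x}

lemma weylWord_mem_WS {N : ℕ} (w : Fin N → Bool) : weylWord k w ∈ WS k :=
  Submodule.subset_span ⟨N, w, rfl⟩

lemma one_mem_WS : (1 : Weyl k) ∈ WS k :=
  Submodule.subset_span ⟨0, fun i => i.elim0, weylWord_nil _⟩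

lemma mk_g (c : Bool) :
    RingQuot.mkAlgHom k (WeylRel k) (FreeAlgebra.ι k c) = g k c := by
  have h := congrFun (congrArg DFunLike.coe (RingQuot.mkAlgHom_coe k (WeylRel k)))
    (FreeAlgebra.ι k c)
  cases c
  · exact h
  · exact h

lemma weylWord_one (c : Bool) : weylWord k (fun _ : Fin 1 => c) = g k c := by
  rw [weylWord_def]
  simp

lemma WS_mul {x y : Weyl k} (hx : x ∈ WS k) (hy : y ∈ WS k) : x * y ∈ WS k := by
  induction hx using Submodule.span_induction with
  | mem x hx =>
    obtain ⟨N, u, rfl⟩ := hx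
    induction hy using Submodule.span_induction with
    | mem y hy =>
      obtain ⟨M, v, rfl⟩ := hy
      refine Submodule.subset_span ⟨N + M, Fin.append u v, ?_⟩
      rw [weylWord_eq_wd, weylWord_eq_wd, weylWord_eq_wd, List.ofFn_fin_append, wd_append]
    | zero => rw [mul_zero]; exact Submodule.zero_mem _
    | add y z _ _ hy hz => rw [mul_add]; exact Submodule.add_mem _ hy hz
    | smul a y _ hy => rw [mul_smul_comm]; exact Submodule.smul_mem _ _ hy
  | zero => rw [zero_mul]; exact Submodule.zero_mem _
  | add x z _ _ hx hz => rw [add_mul]; exact Submodule.add_mem _ hx hz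
  | smul a x _ hx => rw [smul_mul_assoc]; exact Submodule.smul_mem _ _ hx

lemma mem_WS (x : Weyl k) : x ∈ WS k := by
  obtain ⟨a, rfl⟩ := RingQuot.mkAlgHom_surjective k (WeylRel k) x
  induction a using FreeAlgebra.induction with
  | grade0 r =>
    rw [AlgHom.commutes, Algebra.algebraMap_eq_smul_one]
    exact Submodule.smul_mem _ _ one_mem_WS
  | grade1 c =>
    rw [mk_g]
    rw [← weylWord_one (k := k) c]
    exact weylWord_mem_WS _
  | mul a b ha hb => rw [map_mul]; exact WS_mul ha hb
  | add a b ha hb => rw [map_add]; exact Submodule.add_mem _ ha hb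

lemma sum_ite_lt (n N : ℕ) :
    (∑ i : Fin N, if (i : ℕ) < n then 1 else 0) = min n N := by
  induction N with
  | zero => simp
  | succ N ih =>
    rw [Fin.sum_univ_castSucc]
    simp only [Fin.coe_castSucc, Fin.val_last, ih]
    split_ifs <;> omega

lemma cnt_sorted (n N : ℕ) (h : n ≤ N) :
    cnt (fun i : Fin N => decide ((i : ℕ) < n)) = n := by
  rw [cnt_eq_sum]
  have : ∀ i : Fin N, ((if (decide ((i : ℕ) < n)) = true then 1 else 0) : ℕ)
      = if (i : ℕ) < n then 1 else 0 := by
    intro i; split_ifs with h1 h2 <;> simp_all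
  rw [Finset.sum_congr rfl fun i _ => this i, sum_ite_lt]
  omega

lemma symMonomial_mem_SymS (n m : ℕ) : symMonomial k n m ∈ SymS k :=
  Submodule.subset_span ⟨n, m, rfl⟩

section field
variable {k : Type*} [Field k] [CharZero k]

lemma wd_mem : ∀ (L : ℕ) (l : List Bool), l.length = L → wd k l ∈ SymS k := by
  intro L
  induction L using Nat.strong_induction_on with
  | _ L IHL =>
  intro l hlen
  -- inner difference lemma
  have diff : ∀ (t : ℕ) (l' : List Bool), invL l' ≤ t → l'.length = L →
      wd k l' - wd k (sortedL (cntT l') (L - cntT l')) ∈ SymS k := by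
    intro t
    induction t with
    | zero =>
      intro l' hinv hlen'
      rcases descent_or_sorted l' with hs | ⟨l₁, l₂, hd⟩
      · rw [← hlen', ← hs, sub_self]; exact Submodule.zero_mem _
      · exfalso
        have := inv_swap l₁ l₂
        rw [← hd] at this
        omega
    | succ t iht =>
      intro l' hinv hlen'
      rcases descent_or_sorted l' with hs | ⟨l₁, l₂, hd⟩
      · rw [← hlen', ← hs, sub_self]; exact Submodule.zero_mem _
      · have hswap := wd_swap (k := k) l₁ l₂
        rw [← hd] at hswap
        have hw : wd k l' = wd k (l₁ ++ true :: false :: l₂) - wd k (l₁ ++ l₂) := by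
          rw [hswap, add_sub_cancel_right]
        have hct : cntT (l₁ ++ true :: false :: l₂) = cntT l' := by
          rw [hd, cntT_append, cntT_append, cntT_cons, cntT_cons, cntT_cons, cntT_cons]
          simp
        have hln : (l₁ ++ true :: false :: l₂).length = L := by
          rw [← hlen', hd]; simp
        have hinv' : invL (l₁ ++ true :: false :: l₂) ≤ t := by
          have h2 := inv_swap l₁ l₂
          rw [← hd] at h2
          omega
        have h1 := iht (l₁ ++ true :: false :: l₂) hinv' hln
        rw [hct] at h1
        have h2 : wd k (l₁ ++ l₂) ∈ SymS k := by
          refine IHL (l₁ ++ l₂).length ?_ _ rfl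
          have hlen2 : l'.length = l₁.length + l₂.length + 2 := by
            rw [hd, List.length_append, List.length_cons, List.length_cons]
            omega
          rw [List.length_append]
          omega
        have : wd k l' - wd k (sortedL (cntT l') (L - cntT l'))
            = (wd k (l₁ ++ true :: false :: l₂) - wd k (sortedL (cntT l') (L - cntT l')))
              - wd k (l₁ ++ l₂) := by
          rw [hw]; abel
        rw [this]
        exact Submodule.sub_mem _ h1 h2
  -- averaging
  set n := cntT l with hn
  have hnle : n ≤ L := hlen ▸ cntT_le_length l
  set srt := sortedL n (L - n) with hsrt
  have hsrtlen : srt.length = L := by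
    rw [hsrt, sortedL]; simp; omega
  have hsrtcnt : cntT srt = n := by
    rw [hsrt, sortedL, cntT_append]
    have h1 : cntT (List.replicate n true) = n := by simp [cntT]
    have h2 : cntT (List.replicate (L - n) false) = 0 := by
      simp [cntT, List.count_replicate]
    omega
  -- the symmetrized monomial as a sum over Fin L words
  have hsym : symMonomial k n (L - n)
      = ∑ w : Fin L → Bool, if cnt w = n then weylWord k w else 0 :=
    symM_cast n (L - n) L (by omega)
  set C := (Finset.univ.filter fun w : Fin L → Bool => cnt w = n).card with hC
  have hsum : (∑ w : Fin L → Bool,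
        if cnt w = n then weylWord k w - wd k srt else 0) + C • wd k srt
      = symMonomial k n (L - n) := by
    rw [hsym]
    have hsplit : ∀ w : Fin L → Bool,
        (if cnt w = n then weylWord k w - wd k srt else 0)
          = (if cnt w = n then weylWord k w else 0)
            - (if cnt w = n then wd k srt else 0) := by
      intro w; split_ifs <;> simp
    have hc2 : (∑ w : Fin L → Bool, if cnt w = n then wd k srt else 0) = C • wd k srt := by
      rw [Finset.sum_ite, Finset.sum_const, Finset.sum_const_zero, add_zero]
    rw [Finset.sum_congr rfl fun w _ => hsplit w, Finset.sum_sub_distrib, hc2,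
      sub_add_cancel]
  have hdiffs : (∑ w : Fin L → Bool,
      if cnt w = n then weylWord k w - wd k srt else 0) ∈ SymS k := by
    refine Submodule.sum_mem _ fun w _ => ?_
    split_ifs with hw
    · have hd1 := diff (invL (List.ofFn w)) (List.ofFn w) le_rfl (by simp)
      rw [cntT_ofFn, hw] at hd1
      have hd2 := diff (invL srt) srt le_rfl hsrtlen
      rw [hsrtcnt] at hd2
      have : weylWord k w - wd k srt
          = (wd k (List.ofFn w) - wd k (sortedL n (L - n)))
            - (wd k srt - wd k (sortedL n (L - n))) := by
        rw [← weylWord_eq_wd]; abel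
      rw [this]
      exact Submodule.sub_mem _ hd1 hd2
    · exact Submodule.zero_mem _
  have hCmem : (C : ℕ) • wd k srt ∈ SymS k := by
    have : (C : ℕ) • wd k srt = symMonomial k n (L - n)
        - ∑ w : Fin L → Bool, (if cnt w = n then weylWord k w - wd k srt else 0) := by
      rw [← hsum]; abel
    rw [this]
    exact Submodule.sub_mem _ (symMonomial_mem_SymS n (L - n)) hdiffs
  have hC0 : C ≠ 0 := by
    have hpos : 0 < (Finset.univ.filter fun w : Fin L → Bool => cnt w = n).card := by
      refine Finset.card_pos.mpr ⟨fun i => decide ((i : ℕ) < n), ?_⟩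
      simp only [Finset.mem_filter, Finset.mem_univ, true_and]
      exact cnt_sorted n L hnle
    omega
  have hsrtmem : wd k srt ∈ SymS k := by
    have hcast : ((C : k)) • wd k srt = (C : ℕ) • wd k srt := Nat.cast_smul_eq_nsmul k C _
    have : wd k srt = ((C : k))⁻¹ • (((C : k)) • wd k srt) := by
      rw [smul_smul, inv_mul_cancel₀ (Nat.cast_ne_zero.mpr hC0), one_smul]
    rw [this, hcast]
    exact Submodule.smul_mem _ _ hCmem
  have hfin := diff (invL l) l le_rfl hlen
  rw [← hn] at hfin
  have : wd k l = (wd k l - wd k (sortedL n (L - n))) + wd k srt := by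
    rw [hsrt]; abel
  rw [this]
  exact Submodule.add_mem _ hfin hsrtmem

lemma mem_SymS (x : Weyl k) : x ∈ SymS k := by
  have h1 := mem_WS x
  refine Submodule.span_le.mpr ?_ h1
  rintro y ⟨N, w, rfl⟩
  rw [weylWord_eq_wd]
  exact wd_mem N (List.ofFn w) (by simp)

end field
end WeylAux

namespace WeylAux
variable {k : Type*} [Field k] [CharZero k]

lemma ring_id_mul {R : Type*} [Ring R] (x y xk yk b : R) :
    (x*y)*b - b*(xk*yk) = (x*(y*b) - (y*b)*xk) + (y*(b*xk) - (b*xk)*yk) := by noncomm_ring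

lemma mul_neg_fix {R : Type*} [Ring R] (a b : R) :
    a * b - b * -a = a * b + b * a := by rw [mul_neg, sub_neg_eq_add]

lemma ring_id_add {R : Type*} [Ring R] (x y xk yk b : R) :
    (x+y)*b - b*(xk+yk) = (x*b - b*xk) + (y*b - b*yk) := by noncomm_ring

lemma str_gen (Str : Weyl k →ₗ[k] k)
    (hSym : ∀ n m : ℕ, 0 < n + m → Str (symMonomial k n m) = 0)
    (c : Bool) (b : Weyl k) :
    Str (g k c * b + b * g k c) = 0 := by
  have hb := mem_SymS (k := k) b
  set L : Weyl k →ₗ[k] k :=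
    Str.comp (LinearMap.mulLeft k (g k c) + LinearMap.mulRight k (g k c)) with hL
  have hLb : ∀ x : Weyl k, L x = Str (g k c * x + x * g k c) := by
    intro x
    simp [hL, LinearMap.mulLeft_apply, LinearMap.mulRight_apply]
  rw [← hLb b]
  have hker : SymS k ≤ LinearMap.ker L := by
    rw [SymS, Submodule.span_le]
    rintro x ⟨n, m, rfl⟩
    simp only [SetLike.mem_coe, LinearMap.mem_ker]
    rw [hLb]
    cases c
    · -- p case
      have hkey := congrArg Str (keyP (k := k) n m)
      rw [map_nsmul, map_nsmul, map_nsmul, hSym n (m + 1) (by omega),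
        smul_zero, smul_zero] at hkey
      have h0 : ((n + m + 1 : ℕ) : k) ≠ 0 := Nat.cast_ne_zero.mpr (by omega)
      rw [nsmul_eq_mul] at hkey
      have := (mul_eq_zero.mp hkey).resolve_left h0
      exact this
    · -- q case
      have hkey := congrArg Str (keyQ (k := k) n m)
      rw [map_nsmul, map_nsmul, map_nsmul, hSym (n + 1) m (by omega),
        smul_zero, smul_zero] at hkey
      have h0 : ((n + m + 1 : ℕ) : k) ≠ 0 := Nat.cast_ne_zero.mpr (by omega)
      rw [nsmul_eq_mul] at hkey
      exact (mul_eq_zero.mp hkey).resolve_left h0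
  exact LinearMap.mem_ker.mp (hker hb)

end WeylAux


open WeylAux

theorem supertrace_twisted_commutator (k : Type*) [Field k] [CharZero k]
    (Str : Weyl k →ₗ[k] k)
    (hOne : Str 1 = 1)
    (hSym : ∀ n m : ℕ, 0 < n + m → Str (symMonomial k n m) = 0)
    (κ : Weyl k →ₐ[k] Weyl k)
    (hκq : κ (Wq k) = - Wq k) (hκp : κ (Wp k) = - Wp k) :
    ∀ a b : Weyl k, Str (a * b - b * κ a) = 0 := by
  suffices h : ∀ x : FreeAlgebra k Bool, ∀ b : Weyl k,
      Str (RingQuot.mkAlgHom k (WeylRel k) x * b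
        - b * κ (RingQuot.mkAlgHom k (WeylRel k) x)) = 0 by
    intro a b
    obtain ⟨x, rfl⟩ := RingQuot.mkAlgHom_surjective k (WeylRel k) a
    exact h x b
  intro x
  induction x using FreeAlgebra.induction with
  | grade0 r =>
    intro b
    rw [AlgHom.commutes, AlgHom.commutes]
    rw [Algebra.commutes r b, sub_self, map_zero]
  | grade1 c =>
    intro b
    rw [mk_g]
    have hκg : κ (g k c) = - g k c := by
      cases c
      · exact hκp
      · exact hκq
    have harg : g k c * b - b * κ (g k c) = g k c * b + b * g k c := by
      rw [hκg]
      exact mul_neg_fix (g k c) b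
    rw [harg]
    exact str_gen Str hSym c b
  | mul x y hx hy =>
    intro b
    rw [map_mul, map_mul, ring_id_mul, map_add,
      hx (RingQuot.mkAlgHom k (WeylRel k) y * b),
      hy (b * κ (RingQuot.mkAlgHom k (WeylRel k) x)), add_zero]
  | add x y hx hy =>
    intro b
    rw [map_add, map_add, ring_id_add, map_add, hx b, hy b, add_zero]
end

section
/- The bilinear form B(a,b) = Str(a ⋆ b) on the Weyl algebra A₁, where Str is the supertrace (evaluation of the Weyl symbol at 0), is nondegenerate. -/
/- STATEMENT 5: The bilinear form B(a,b) = Str(a ⋆ b) on the Weyl algebra A₁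
realized as polynomials in y₁,y₂ with the Weyl–Moyal star product, where
Str f = f(0,0) is the supertrace (evaluation of the Weyl symbol at 0), is
nondegenerate: if Str(a ⋆ b) = 0 for all b then a = 0. -/

open MvPolynomial

noncomputable section

/-- the supertrace: evaluation of the Weyl symbol at the origin. -/
def StrM (f : P2) : ℂ := constantCoeff f

/-- pderiv of variable outside the range of a rename is zero -/
lemma pderiv_rename_zero_s5 (e : Fin 2 → Fin 4) (j : Fin 4) (hj : ∀ i, e i ≠ j) (p : P2) :
    pderiv j (rename e p) = 0 := by
  apply pderiv_eq_zero_of_notMem_vars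
  intro hmem
  have := vars_rename e p hmem
  simp only [Finset.mem_image] at this
  obtain ⟨i, -, hi⟩ := this
  exact hj i hi

/-- iterated pderiv on a monomial -/
lemma dpow_monomial (i : Fin 2) (t : ℕ) (s : Fin 2 →₀ ℕ) (c : ℂ) :
    (((pderiv i : Derivation ℂ P2 P2).toLinearMap) ^ t) (monomial s c)
      = monomial (s - Finsupp.single i t) (c * ((s i).descFactorial t : ℕ)) := by
  induction t generalizing s c with
  | zero => simp
  | succ t ih =>
    rw [pow_succ, Module.End.mul_apply]
    have h1 : ((pderiv i : Derivation ℂ P2 P2).toLinearMap) (monomial s c)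
        = monomial (s - Finsupp.single i 1) (c * (s i)) := pderiv_monomial
    rw [h1, ih]
    have hE : s - Finsupp.single i 1 - Finsupp.single i t = s - Finsupp.single i (t+1) := by
      ext k
      simp only [Finsupp.tsub_apply, Finsupp.single_apply]
      split <;> omega
    rw [hE]
    congr 1
    have hs : (s - Finsupp.single i 1 : Fin 2 →₀ ℕ) i = s i - 1 := by
      simp [Finsupp.tsub_apply]
    rw [hs]
    have hD : (s i) * ((s i - 1).descFactorial t) = (s i).descFactorial (t+1) := by
      cases hsi : s i with
      | zero => simp
      | succ n => rw [Nat.succ_descFactorial_succ]; simp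
    push_cast [← hD]
    ring

/-- the key coefficient-extraction lemma -/
lemma constCoeff_dpow_dpow (u v : Fin 2) (huv : u ≠ v) (s t : ℕ) (p : P2) :
    constantCoeff ((((pderiv u : Derivation ℂ P2 P2).toLinearMap) ^ s)
        ((((pderiv v : Derivation ℂ P2 P2).toLinearMap) ^ t) p))
      = (s.factorial * t.factorial : ℕ) *
          coeff (Finsupp.single u s + Finsupp.single v t) p := by
  induction p using MvPolynomial.induction_on' with
  | add p q hp hq => simp [map_add, hp, hq]; ring
  | monomial w c =>
    rw [dpow_monomial, dpow_monomial, constantCoeff_monomial, coeff_monomial]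
    have hwu : (w - Finsupp.single v t : Fin 2 →₀ ℕ) u = w u := by
      simp [Finsupp.tsub_apply, Finsupp.single_apply, huv.symm]
    rw [hwu]
    by_cases h1 : t ≤ w v
    · by_cases h2 : s ≤ w u
      · by_cases hw : w = Finsupp.single u s + Finsupp.single v t
        · subst hw
          have hv : (Finsupp.single u s + Finsupp.single v t : Fin 2 →₀ ℕ) v = t := by
            simp [Finsupp.single_apply, huv, huv.symm]
          have hu : (Finsupp.single u s + Finsupp.single v t : Fin 2 →₀ ℕ) u = s := by
            simp [Finsupp.single_apply, huv, huv.symm]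
          rw [hv, hu, if_pos rfl, if_pos]
          · simp [Nat.descFactorial_self]; ring
          · ext k
            simp only [Finsupp.tsub_apply, Finsupp.coe_add, Pi.add_apply,
              Finsupp.single_apply, Finsupp.coe_zero, Pi.zero_apply]
            split <;> split <;> omega
        · rw [if_neg hw, mul_zero, if_neg]
          intro hz
          apply hw
          ext k
          have hk := DFunLike.congr_fun hz k
          simp only [Finsupp.tsub_apply, Finsupp.coe_zero, Pi.zero_apply] at hk
          have hsu : (Finsupp.single u s : Fin 2 →₀ ℕ) k = if u = k then s else 0 :=
            Finsupp.single_apply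
          have hsv : (Finsupp.single v t : Fin 2 →₀ ℕ) k = if v = k then t else 0 :=
            Finsupp.single_apply
          simp only [Finsupp.coe_add, Pi.add_apply, hsu, hsv] at hk ⊢
          by_cases hku : u = k
          · subst hku
            simp [Ne.symm huv] at hk ⊢
            omega
          · by_cases hkv : v = k
            · subst hkv
              simp [huv, hku] at hk ⊢
              omega
            · simp [hku, hkv] at hk ⊢
              omega
      · push_neg at h2
        rw [Nat.descFactorial_eq_zero_iff_lt.2 h2]
        have hne : w ≠ Finsupp.single u s + Finsupp.single v t := by
          intro hw; subst hw
          simp [Finsupp.single_apply, huv, huv.symm] at h2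
        rw [if_neg hne, mul_zero]
        simp
    · push_neg at h1
      rw [Nat.descFactorial_eq_zero_iff_lt.2 h1]
      have hne : w ≠ Finsupp.single u s + Finsupp.single v t := by
        intro hw; subst hw
        simp [Finsupp.single_apply, huv, huv.symm] at h1
      rw [if_neg hne, mul_zero]
      simp

def mL1 : Module.End ℂ P4 :=
  (pderiv (1 : Fin 4) : Derivation ℂ P4 P4).toLinearMap ∘ₗ
    (pderiv (2 : Fin 4) : Derivation ℂ P4 P4).toLinearMap
def mL2 : Module.End ℂ P4 :=
  (pderiv (0 : Fin 4) : Derivation ℂ P4 P4).toLinearMap ∘ₗ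
    (pderiv (3 : Fin 4) : Derivation ℂ P4 P4).toLinearMap

lemma moyalOp_eq_s5 : moyalOp = mL1 - mL2 := rfl

/-- doubled product -/
def pr (f g : P2) : P4 := rename emb1 f * rename emb2 g

lemma emb1_inj : Function.Injective emb1 := by decide
lemma emb2_inj : Function.Injective emb2 := by decide

lemma pd_emb1 (j : Fin 4) (hj : j = 2 ∨ j = 3) (p : P2) : pderiv j (rename emb1 p) = 0 := by
  apply pderiv_rename_zero_s5
  intro i
  rcases hj with h | h <;> subst h <;> fin_cases i <;> decide

lemma pd_emb2 (j : Fin 4) (hj : j = 0 ∨ j = 1) (p : P2) : pderiv j (rename emb2 p) = 0 := by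
  apply pderiv_rename_zero_s5
  intro i
  rcases hj with h | h <;> subst h <;> fin_cases i <;> decide

lemma mL1_pr (f g : P2) : mL1 (pr f g) = pr (pderiv 1 f) (pderiv 0 g) := by
  have h2 : (2 : Fin 4) = emb2 0 := by decide
  have h1 : (1 : Fin 4) = emb1 1 := by decide
  simp only [mL1, LinearMap.coe_comp, Function.comp_apply, Derivation.coeFn_coe, pr]
  rw [pderiv_mul, pd_emb1 2 (Or.inl rfl), zero_mul, zero_add,
    h2, pderiv_rename emb2_inj, pderiv_mul,
    pd_emb2 1 (Or.inr rfl), mul_zero, add_zero, h1, pderiv_rename emb1_inj]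

lemma mL2_pr (f g : P2) : mL2 (pr f g) = pr (pderiv 0 f) (pderiv 1 g) := by
  have h3 : (3 : Fin 4) = emb2 1 := by decide
  have h0 : (0 : Fin 4) = emb1 0 := by decide
  simp only [mL2, LinearMap.coe_comp, Function.comp_apply, Derivation.coeFn_coe, pr]
  rw [pderiv_mul, pd_emb1 3 (Or.inr rfl), zero_mul, zero_add,
    h3, pderiv_rename emb2_inj, pderiv_mul,
    pd_emb2 0 (Or.inl rfl), mul_zero, add_zero, h0, pderiv_rename emb1_inj]

lemma mL1_pow_pr (s : ℕ) (f g : P2) :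
    (mL1 ^ s) (pr f g)
      = pr ((((pderiv 1 : Derivation ℂ P2 P2).toLinearMap) ^ s) f)
          ((((pderiv 0 : Derivation ℂ P2 P2).toLinearMap) ^ s) g) := by
  induction s generalizing f g with
  | zero => simp
  | succ s ih => rw [pow_succ, Module.End.mul_apply, mL1_pr, ih]; rfl

lemma mL2_pow_pr (s : ℕ) (f g : P2) :
    (mL2 ^ s) (pr f g)
      = pr ((((pderiv 0 : Derivation ℂ P2 P2).toLinearMap) ^ s) f)
          ((((pderiv 1 : Derivation ℂ P2 P2).toLinearMap) ^ s) g) := by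
  induction s generalizing f g with
  | zero => simp
  | succ s ih => rw [pow_succ, Module.End.mul_apply, mL2_pr, ih]; rfl

lemma pderiv_pderiv_comm (i j : Fin 4) (p : P4) :
    pderiv i (pderiv j p) = pderiv j (pderiv i p) := by
  induction p using MvPolynomial.induction_on' with
  | add p q hp hq => simp [hp, hq]
  | monomial w c =>
    simp only [pderiv_monomial]
    by_cases hij : i = j
    · subst hij; rfl
    · have h1 : (w - Finsupp.single j 1 : Fin 4 →₀ ℕ) i = w i := by
        rw [Finsupp.tsub_apply, Finsupp.single_apply, if_neg (Ne.symm hij), Nat.sub_zero]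
      have h2 : (w - Finsupp.single i 1 : Fin 4 →₀ ℕ) j = w j := by
        rw [Finsupp.tsub_apply, Finsupp.single_apply, if_neg hij, Nat.sub_zero]
      rw [h1, h2]
      have hE : w - Finsupp.single j 1 - Finsupp.single i 1
          = w - Finsupp.single i 1 - Finsupp.single j 1 := tsub_right_comm
      rw [hE]
      congr 1
      ring

lemma mL_commute : Commute mL1 mL2 := by
  apply LinearMap.ext
  intro p
  simp only [mL1, mL2, Module.End.mul_apply, LinearMap.coe_comp, Function.comp_apply,
    Derivation.coeFn_coe]
  rw [pderiv_pderiv_comm 2 0, pderiv_pderiv_comm 1 0, pderiv_pderiv_comm 2 3,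
    pderiv_pderiv_comm 1 3]

lemma neg_mL2_pow_pr (s : ℕ) (f g : P2) :
    ((-mL2) ^ s) (pr f g)
      = (-1 : ℂ) ^ s • pr ((((pderiv 0 : Derivation ℂ P2 P2).toLinearMap) ^ s) f)
          ((((pderiv 1 : Derivation ℂ P2 P2).toLinearMap) ^ s) g) := by
  rw [show (-mL2) = ((-1 : ℂ) • mL2) from (neg_one_smul ℂ mL2).symm, smul_pow, LinearMap.smul_apply, mL2_pow_pr]

lemma moyal_pow_pr (k : ℕ) (f g : P2) :
    (moyalOp ^ k) (pr f g) = ∑ j ∈ Finset.range (k+1),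
      (((-1:ℂ)^(k-j) * (k.choose j)) •
        pr ((((pderiv 1 : Derivation ℂ P2 P2).toLinearMap) ^ j)
              ((((pderiv 0 : Derivation ℂ P2 P2).toLinearMap) ^ (k-j)) f))
           ((((pderiv 0 : Derivation ℂ P2 P2).toLinearMap) ^ j)
              ((((pderiv 1 : Derivation ℂ P2 P2).toLinearMap) ^ (k-j)) g))) := by
  rw [moyalOp_eq_s5, sub_eq_add_neg, (mL_commute.neg_right).add_pow k]
  rw [LinearMap.coe_sum, Finset.sum_apply]
  refine Finset.sum_congr rfl fun j hj => ?_
  rw [Module.End.mul_apply, Module.End.mul_apply, Module.End.natCast_apply]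
  rw [map_nsmul, map_nsmul, neg_mL2_pow_pr, map_smul, mL1_pow_pr]
  rw [mul_smul, Nat.cast_smul_eq_nsmul, smul_comm]

lemma single_eq_iff (m n j t : ℕ) :
    (Finsupp.single (0 : Fin 2) m + Finsupp.single 1 n
      = Finsupp.single 0 j + Finsupp.single 1 t) ↔ (m = j ∧ n = t) := by
  constructor
  · intro hE
    have h0 := DFunLike.congr_fun hE 0
    have h1 := DFunLike.congr_fun hE 1
    simp [Finsupp.single_apply, show (1 : Fin 2) ≠ 0 by decide,
      show (0 : Fin 2) ≠ 1 by decide] at h0 h1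
    exact ⟨h0, h1⟩
  · rintro ⟨rfl, rfl⟩; rfl

lemma constCoeff_pr (f g : P2) :
    constantCoeff (pr f g) = constantCoeff f * constantCoeff g := by
  rw [pr, map_mul, constantCoeff_rename, constantCoeff_rename]

/-- key coefficient vanishing -/
lemma key_coeff (a : P2) (h : ∀ b : P2, StrM (moyalStar a b) = 0) (m n : ℕ) :
    coeff (Finsupp.single 1 m + Finsupp.single 0 n) a = 0 := by
  have hs := h (monomial (Finsupp.single 0 m + Finsupp.single 1 n) 1)
  set b : P2 := monomial (Finsupp.single 0 m + Finsupp.single 1 n) (1:ℂ) with hbdef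
  have hdeg : b.totalDegree = m + n := by
    rw [hbdef, totalDegree_monomial _ one_ne_zero]
    simp [Finsupp.sum_add_index', Finsupp.sum_single_index]
  rw [StrM, moyalStar, map_sum] at hs
  have hterm : ∀ k, constantCoeff (((k.factorial : ℂ))⁻¹ •
        rename collapse ((moyalOp ^ k) (rename emb1 a * rename emb2 b)))
      = ((k.factorial : ℂ))⁻¹ * ∑ j ∈ Finset.range (k+1),
          ((-1:ℂ)^(k-j) * (k.choose j))
            * (((j.factorial * (k-j).factorial : ℕ) : ℂ)
                * coeff (Finsupp.single 1 j + Finsupp.single 0 (k-j)) a)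
            * (((j.factorial * (k-j).factorial : ℕ) : ℂ)
                * (if (Finsupp.single 0 m + Finsupp.single 1 n : Fin 2 →₀ ℕ)
                    = Finsupp.single 0 j + Finsupp.single 1 (k-j) then (1:ℂ) else 0)) := by
    intro k
    rw [constantCoeff_smul, constantCoeff_rename,
      show rename emb1 a * rename emb2 b = pr a b from rfl, moyal_pow_pr, map_sum, smul_eq_mul]
    congr 1
    refine Finset.sum_congr rfl fun j _ => ?_
    rw [constantCoeff_smul, smul_eq_mul, constCoeff_pr,
      constCoeff_dpow_dpow 1 0 (by decide) j (k-j) a,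
      constCoeff_dpow_dpow 0 1 (by decide) j (k-j) b,
      hbdef, coeff_monomial]
    push_cast
    ring
  rw [Finset.sum_congr rfl (fun k _ => hterm k)] at hs
  have hzero : ∀ k ∈ Finset.range (a.totalDegree + b.totalDegree + 1), k ≠ m + n →
      ((k.factorial : ℂ))⁻¹ * ∑ j ∈ Finset.range (k+1),
          ((-1:ℂ)^(k-j) * (k.choose j))
            * (((j.factorial * (k-j).factorial : ℕ) : ℂ)
                * coeff (Finsupp.single 1 j + Finsupp.single 0 (k-j)) a)
            * (((j.factorial * (k-j).factorial : ℕ) : ℂ)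
                * (if (Finsupp.single 0 m + Finsupp.single 1 n : Fin 2 →₀ ℕ)
                    = Finsupp.single 0 j + Finsupp.single 1 (k-j) then (1:ℂ) else 0)) = 0 := by
    intro k _ hkne
    apply mul_eq_zero_of_right
    apply Finset.sum_eq_zero
    intro j hj
    rw [if_neg, mul_zero, mul_zero]
    intro hcond
    obtain ⟨rfl, rfl⟩ := (single_eq_iff _ _ _ _).1 hcond
    exact hkne (Nat.add_sub_cancel' (Nat.lt_succ_iff.1 (Finset.mem_range.1 hj))).symm
  have hmem : m + n ∈ Finset.range (a.totalDegree + b.totalDegree + 1) := by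
    rw [hdeg, Finset.mem_range]; omega
  rw [Finset.sum_eq_single_of_mem (m+n) hmem hzero] at hs
  have hinner : ∀ j ∈ Finset.range (m+n+1), j ≠ m →
      ((-1:ℂ)^(m+n-j) * ((m+n).choose j))
            * (((j.factorial * ((m+n)-j).factorial : ℕ) : ℂ)
                * coeff (Finsupp.single 1 j + Finsupp.single 0 ((m+n)-j)) a)
            * (((j.factorial * ((m+n)-j).factorial : ℕ) : ℂ)
                * (if (Finsupp.single 0 m + Finsupp.single 1 n : Fin 2 →₀ ℕ)
                    = Finsupp.single 0 j + Finsupp.single 1 ((m+n)-j) then (1:ℂ) else 0)) = 0 := by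
    intro j _ hjne
    rw [if_neg, mul_zero, mul_zero]
    intro hcond
    exact hjne ((single_eq_iff _ _ _ _).1 hcond).1.symm
  have hmmem : m ∈ Finset.range (m+n+1) := by rw [Finset.mem_range]; omega
  rw [Finset.sum_eq_single_of_mem m hmmem hinner, Nat.add_sub_cancel_left, if_pos rfl,
    mul_one] at hs
  have h1 : (((m+n).factorial : ℂ))⁻¹ ≠ 0 :=
    inv_ne_zero (Nat.cast_ne_zero.2 (Nat.factorial_ne_zero _))
  have h2 : ((-1:ℂ)^n) ≠ 0 := pow_ne_zero _ (neg_ne_zero.2 one_ne_zero)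
  have h3 : (((m+n).choose m : ℕ) : ℂ) ≠ 0 :=
    Nat.cast_ne_zero.2 (Nat.choose_pos (Nat.le_add_right m n)).ne'
  have h4 : ((m.factorial * n.factorial : ℕ) : ℂ) ≠ 0 :=
    Nat.cast_ne_zero.2 (Nat.mul_ne_zero (Nat.factorial_ne_zero _) (Nat.factorial_ne_zero _))
  rcases mul_eq_zero.1 hs with h' | h'
  · exact absurd h' h1
  rcases mul_eq_zero.1 h' with h'' | h''
  · rcases mul_eq_zero.1 h'' with h3' | h3'
    · rcases mul_eq_zero.1 h3' with h4' | h4'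
      · exact absurd h4' h2
      · exact absurd h4' h3
    · rcases mul_eq_zero.1 h3' with h4' | h4'
      · exact absurd h4' h4
      · exact h4'
  · exact absurd h'' h4

/-- Nondegeneracy of the pairing `(a,b) ↦ Str (a ⋆ b)`. -/
theorem moyal_supertrace_pairing_nondegenerate (a : P2)
    (h : ∀ b : P2, StrM (moyalStar a b) = 0) : a = 0 := by
  apply MvPolynomial.ext
  intro d
  rw [coeff_zero]
  have hd : d = Finsupp.single 1 (d 1) + Finsupp.single 0 (d 0) := by
    ext k
    fin_cases k <;> simp [Finsupp.single_apply]
  rw [hd]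
  exact key_coeff a h (d 1) (d 0)

end
end

section
/- Given a cyclic 2-cocycle φ_C on an algebra A (i.e., φ_C(a,b,c) = φ_C(c,a,b) and φ_C(ab,c,d) − φ_C(a,bc,d) + φ_C(a,b,cd) − φ_C(da,b,c) = 0) and 1-forms ω with values in A on a manifold satisfying dω = ω ⋆ ω (where ⋆ combines wedge product with the algebra product), the 3-form J = φ_C(ω, ω, ω) is closed: dJ = 0. -/
/- STATEMENT 15: Given a cyclic 2-cocycle φ_C on a unital associative ℂ-algebra
A (φ_C(a,b,c) = φ_C(c,a,b) and φ_C(ab,c,d) − φ_C(a,bc,d) + φ_C(a,b,cd)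
− φ_C(da,b,c) = 0) and an A-valued 1-form ω satisfying dω = ω ⋆ ω, the 3-form
J = φ_C(ω,ω,ω) is closed: dJ = 0.

We work with formal/algebraic differential forms: A-valued polynomial
coefficient functions are elements of AddMonoidAlgebra A (Fin n →₀ ℕ) (i.e.
polynomials in n coordinates with coefficients in A); a 1-form is a family of
components w μ, and equality of p-forms is equality of totally antisymmetrized
components.  Flatness reads ∂_μ w_ν − ∂_ν w_μ = w_μ w_ν − w_ν w_μ, the 3-form
J has components φ_C(w_μ, w_ν, w_ρ) (extended coefficientwise to scalar-valued
polynomials), and dJ = 0 says the total antisymmetrization of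
∂_{μ₀} J_{μ₁μ₂μ₃} vanishes. -/

open scoped BigOperators

variable {A : Type*} [Ring A] [Algebra ℂ A]

/-- polynomial functions in `n` coordinates with coefficients in `R`. -/
abbrev PForm (R : Type*) [Ring R] (n : ℕ) := AddMonoidAlgebra R (Fin n →₀ ℕ)

/-- the partial derivative `∂_μ` on coefficient functions. -/
noncomputable def pd {R : Type*} [Ring R] (n : ℕ) (μ : Fin n) (x : PForm R n) :
    PForm R n :=
  AddMonoidAlgebra.ofCoeff (Finsupp.sum x.coeff fun m a =>
    Finsupp.single (m - Finsupp.single μ 1) ((m μ) • a))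

/-- the coefficientwise extension of a trilinear functional on `A` to
`A`-valued polynomial functions, with values in scalar polynomial functions. -/
noncomputable def triExt (n : ℕ) (φ : A →ₗ[ℂ] A →ₗ[ℂ] A →ₗ[ℂ] ℂ)
    (x y z : PForm A n) : PForm ℂ n :=
  AddMonoidAlgebra.ofCoeff (Finsupp.sum x.coeff fun m1 a => Finsupp.sum y.coeff fun m2 b =>
    Finsupp.sum z.coeff fun m3 c => Finsupp.single (m1 + m2 + m3) (φ a b c))

section Aux

open Finsupp

/-- coefficient functions. -/
abbrev FF (R : Type*) [Ring R] (n : ℕ) := (Fin n →₀ ℕ) →₀ R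

/-- `pd` on coefficient functions. -/
noncomputable def pdF {R : Type*} [Ring R] (n : ℕ) (μ : Fin n) (x : FF R n) : FF R n :=
  Finsupp.sum x fun m a =>
    Finsupp.single (m - Finsupp.single μ 1) ((m μ) • a)

/-- `triExt` on coefficient functions. -/
noncomputable def triF {A : Type*} [Ring A] [Algebra ℂ A] (n : ℕ)
    (φ : A →ₗ[ℂ] A →ₗ[ℂ] A →ₗ[ℂ] ℂ) (x y z : FF A n) : FF ℂ n :=
  Finsupp.sum x fun m1 a => Finsupp.sum y fun m2 b => Finsupp.sum z fun m3 c =>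
    Finsupp.single (m1 + m2 + m3) (φ a b c)

/-- multiplication on coefficient functions. -/
noncomputable def mulF {R : Type*} [Ring R] {n : ℕ} (x y : FF R n) : FF R n :=
  x.sum fun m1 a => y.sum fun m2 b => Finsupp.single (m1 + m2) (a * b)

lemma mulF_def {R : Type*} [Ring R] {n : ℕ} (x y : FF R n) :
    mulF x y = x.sum fun m1 a => y.sum fun m2 b => Finsupp.single (m1 + m2) (a * b) := rfl

lemma coeff_mulF {R : Type*} [Ring R] {n : ℕ} (x y : PForm R n) :
    (x * y).coeff = mulF x.coeff y.coeff := by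
  rw [AddMonoidAlgebra.mul_def, AddMonoidAlgebra.coeff_finsuppSum]
  simp only [AddMonoidAlgebra.coeff_finsuppSum, AddMonoidAlgebra.coeff_single]
  rfl

variable {n : ℕ}

/-! ### generalities on `Finsupp.sum` -/

lemma sum_comm3 {ι₁ ι₂ ι₃ M₁ M₂ M₃ N : Type*} [Zero M₁] [Zero M₂] [Zero M₃]
    [AddCommMonoid N] (p : ι₁ →₀ M₁) (q : ι₂ →₀ M₂) (r : ι₃ →₀ M₃)
    (f : ι₁ → M₁ → ι₂ → M₂ → ι₃ → M₃ → N) :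
    (p.sum fun i a => q.sum fun j b => r.sum fun k c => f i a j b k c)
      = q.sum fun j b => r.sum fun k c => p.sum fun i a => f i a j b k c := by
  refine (Finsupp.sum_comm p q _).trans ?_
  exact Finsupp.sum_congr fun j _ => Finsupp.sum_comm p r _

lemma sum_comm4 {ι₁ ι₂ ι₃ ι₄ M₁ M₂ M₃ M₄ N : Type*} [Zero M₁] [Zero M₂] [Zero M₃]
    [Zero M₄] [AddCommMonoid N] (p : ι₁ →₀ M₁) (q : ι₂ →₀ M₂) (r : ι₃ →₀ M₃)
    (s : ι₄ →₀ M₄) (f : ι₁ → M₁ → ι₂ → M₂ → ι₃ → M₃ → ι₄ → M₄ → N) :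
    (p.sum fun i a => q.sum fun j b => r.sum fun k c => s.sum fun l d => f i a j b k c l d)
      = q.sum fun j b => r.sum fun k c => s.sum fun l d => p.sum fun i a => f i a j b k c l d := by
  refine (Finsupp.sum_comm p q _).trans ?_
  exact Finsupp.sum_congr fun j _ => sum_comm3 p r s _

/-! ### basic properties of `pd` -/

lemma pd_def {R : Type*} [Ring R] (μ : Fin n) (x : FF R n) :
    pdF n μ x = x.sum fun m a => Finsupp.single (m - Finsupp.single μ 1) (m μ • a) := rfl

lemma pd_single {R : Type*} [Ring R] (μ : Fin n) (m : Fin n →₀ ℕ) (a : R) :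
    pdF n μ (Finsupp.single m a)
      = Finsupp.single (m - Finsupp.single μ 1) (m μ • a) := by
  rw [pd_def, Finsupp.sum_single_index]
  simp

/-- `pd` as an additive monoid hom. -/
noncomputable def pdHom (R : Type*) [Ring R] (n : ℕ) (μ : Fin n) :
    FF R n →+ FF R n where
  toFun := pdF n μ
  map_zero' := by show pdF n μ 0 = 0; simp [pdF]
  map_add' x y := by
    show pdF n μ (x + y) = pdF n μ x + pdF n μ y
    rw [pd_def, pd_def, pd_def]
    refine Finsupp.sum_add_index' (fun m => ?_) (fun m a b => ?_)
    · simp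
    · rw [smul_add, Finsupp.single_add]

lemma pdHom_apply {R : Type*} [Ring R] (μ : Fin n) (x : FF R n) :
    pdHom R n μ x = pdF n μ x := rfl

variable {A : Type*} [Ring A] [Algebra ℂ A] (φ : A →ₗ[ℂ] A →ₗ[ℂ] A →ₗ[ℂ] ℂ)

/-! ### basic properties of `triExt` -/

lemma triExt_def (x y z : FF A n) :
    triF n φ x y z = x.sum fun m1 a => y.sum fun m2 b => z.sum fun m3 c =>
      Finsupp.single (m1 + m2 + m3) (φ a b c) := rfl

lemma triExt_single_left (m1 : Fin n →₀ ℕ) (a : A) (y z : FF A n) :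
    triF n φ (Finsupp.single m1 a) y z
      = y.sum fun m2 b => z.sum fun m3 c => Finsupp.single (m1 + m2 + m3) (φ a b c) := by
  rw [triExt_def, Finsupp.sum_single_index]
  simp

lemma triExt_single_mid (x : FF A n) (m2 : Fin n →₀ ℕ) (b : A) (z : FF A n) :
    triF n φ x (Finsupp.single m2 b) z
      = x.sum fun m1 a => z.sum fun m3 c => Finsupp.single (m1 + m2 + m3) (φ a b c) := by
  rw [triExt_def]
  exact Finsupp.sum_congr fun m1 _ => Finsupp.sum_single_index (by simp)

lemma triExt_single_right (x y : FF A n) (m3 : Fin n →₀ ℕ) (c : A) :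
    triF n φ x y (Finsupp.single m3 c)
      = x.sum fun m1 a => y.sum fun m2 b => Finsupp.single (m1 + m2 + m3) (φ a b c) := by
  rw [triExt_def]
  exact Finsupp.sum_congr fun m1 _ => Finsupp.sum_congr fun m2 _ =>
    Finsupp.sum_single_index (by simp)

/-- `triExt` as an additive monoid hom in the first slot. -/
noncomputable def triL (n : ℕ) (φ : A →ₗ[ℂ] A →ₗ[ℂ] A →ₗ[ℂ] ℂ) (y z : FF A n) :
    FF A n →+ FF ℂ n where
  toFun x := triF n φ x y z
  map_zero' := by show triF n φ 0 y z = 0; simp [triF]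
  map_add' x x' := by
    show triF n φ (x + x') y z = triF n φ x y z + triF n φ x' y z
    rw [triExt_def, triExt_def, triExt_def]
    refine Finsupp.sum_add_index' (fun m => ?_) (fun m a a' => ?_)
    · simp
    · simp [map_add, LinearMap.add_apply, Finsupp.single_add]

lemma triL_apply (y z x : FF A n) : triL n φ y z x = triF n φ x y z := rfl

/-- `triExt` as an additive monoid hom in the second slot. -/
noncomputable def triM (n : ℕ) (φ : A →ₗ[ℂ] A →ₗ[ℂ] A →ₗ[ℂ] ℂ) (x z : FF A n) :
    FF A n →+ FF ℂ n where
  toFun y := triF n φ x y z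
  map_zero' := by show triF n φ x 0 z = 0; simp [triF]
  map_add' y y' := by
    show triF n φ x (y + y') z = triF n φ x y z + triF n φ x y' z
    rw [triExt_def, triExt_def, triExt_def, ← Finsupp.sum_add]
    refine Finsupp.sum_congr fun m1 _ => ?_
    refine Finsupp.sum_add_index' (fun m => ?_) (fun m b b' => ?_)
    · simp
    · simp [map_add, LinearMap.add_apply, Finsupp.single_add]

lemma triM_apply (x z y : FF A n) : triM n φ x z y = triF n φ x y z := rfl

/-- `triExt` as an additive monoid hom in the third slot. -/
noncomputable def triR (n : ℕ) (φ : A →ₗ[ℂ] A →ₗ[ℂ] A →ₗ[ℂ] ℂ) (x y : FF A n) :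
    FF A n →+ FF ℂ n where
  toFun z := triF n φ x y z
  map_zero' := by show triF n φ x y 0 = 0; simp [triF]
  map_add' z z' := by
    show triF n φ x y (z + z') = triF n φ x y z + triF n φ x y z'
    rw [triExt_def, triExt_def, triExt_def, ← Finsupp.sum_add]
    refine Finsupp.sum_congr fun m1 _ => ?_
    rw [← Finsupp.sum_add]
    refine Finsupp.sum_congr fun m2 _ => ?_
    refine Finsupp.sum_add_index' (fun m => ?_) (fun m c c' => ?_)
    · simp
    · simp [map_add, LinearMap.add_apply, Finsupp.single_add]

lemma triR_apply (x y z : FF A n) : triR n φ x y z = triF n φ x y z := rfl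

lemma triExt_sub_leftF (x x' y z : FF A n) :
    triF n φ (x - x') y z = triF n φ x y z - triF n φ x' y z :=
  map_sub (triL n φ y z) x x'

/-! ### `φ` and natural scalars -/

lemma phi_nsmul₁ (k : ℕ) (a b c : A) : φ (k • a) b c = k • φ a b c := by
  rw [← Nat.cast_smul_eq_nsmul ℂ k a, map_smul, LinearMap.smul_apply,
    LinearMap.smul_apply, Nat.cast_smul_eq_nsmul]

lemma phi_nsmul₂ (k : ℕ) (a b c : A) : φ a (k • b) c = k • φ a b c := by
  rw [← Nat.cast_smul_eq_nsmul ℂ k b, map_smul, LinearMap.smul_apply,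
    Nat.cast_smul_eq_nsmul]

lemma phi_nsmul₃ (k : ℕ) (a b c : A) : φ a b (k • c) = k • φ a b c := by
  rw [← Nat.cast_smul_eq_nsmul ℂ k c, map_smul, Nat.cast_smul_eq_nsmul]

/-! ### monomial arithmetic -/

lemma tsub_shift (μ : Fin n) (u w : Fin n →₀ ℕ) (h : 0 < u μ) :
    u + w - Finsupp.single μ 1 = (u - Finsupp.single μ 1) + w := by
  ext ν
  simp only [Finsupp.tsub_apply, Finsupp.add_apply, Finsupp.single_apply]
  rcases eq_or_ne μ ν with rfl | hν
  · simp
    omega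
  · simp [hν]

lemma key_point (μ : Fin n) (m1 m2 m3 : Fin n →₀ ℕ) (q : ℂ) :
    Finsupp.single (m1 + m2 + m3 - Finsupp.single μ 1) ((m1 + m2 + m3) μ • q)
      = Finsupp.single ((m1 - Finsupp.single μ 1) + m2 + m3) (m1 μ • q)
        + Finsupp.single (m1 + (m2 - Finsupp.single μ 1) + m3) (m2 μ • q)
        + Finsupp.single (m1 + m2 + (m3 - Finsupp.single μ 1)) (m3 μ • q) := by
  have hM : (m1 + m2 + m3) μ = m1 μ + m2 μ + m3 μ := by
    simp [Finsupp.add_apply]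
  rw [hM, add_smul, add_smul, Finsupp.single_add, Finsupp.single_add]
  congr 1
  congr 1
  · rcases Nat.eq_zero_or_pos (m1 μ) with h | h
    · simp [h]
    · congr 1
      rw [show m1 + m2 + m3 = m1 + (m2 + m3) from by abel, tsub_shift μ m1 _ h,
        show m1 - Finsupp.single μ 1 + (m2 + m3)
            = m1 - Finsupp.single μ 1 + m2 + m3 from by
          ext ν; simp only [Finsupp.add_apply]; omega]
  · rcases Nat.eq_zero_or_pos (m2 μ) with h | h
    · simp [h]
    · congr 1
      rw [show m1 + m2 + m3 = m2 + (m1 + m3) from by abel, tsub_shift μ m2 _ h,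
        show m2 - Finsupp.single μ 1 + (m1 + m3)
            = m1 + (m2 - Finsupp.single μ 1) + m3 from by
          ext ν; simp only [Finsupp.add_apply]; omega]
  · rcases Nat.eq_zero_or_pos (m3 μ) with h | h
    · simp [h]
    · congr 1
      rw [show m1 + m2 + m3 = m3 + (m1 + m2) from by abel, tsub_shift μ m3 _ h,
        show m3 - Finsupp.single μ 1 + (m1 + m2)
            = m1 + m2 + (m3 - Finsupp.single μ 1) from by
          ext ν; simp only [Finsupp.add_apply]; omega]

/-! ### canonical triple-sum forms -/

lemma E0 (μ : Fin n) (x y z : FF A n) :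
    pdF n μ (triF n φ x y z)
      = x.sum fun m1 a => y.sum fun m2 b => z.sum fun m3 c =>
          Finsupp.single (m1 + m2 + m3 - Finsupp.single μ 1)
            ((m1 + m2 + m3) μ • φ a b c) := by
  rw [← pdHom_apply, triExt_def, map_finsuppSum]
  refine Finsupp.sum_congr fun m1 _ => ?_
  rw [map_finsuppSum]
  refine Finsupp.sum_congr fun m2 _ => ?_
  rw [map_finsuppSum]
  refine Finsupp.sum_congr fun m3 _ => ?_
  rw [pdHom_apply, pd_single]

lemma E1 (μ : Fin n) (x y z : FF A n) :
    triF n φ (pdF n μ x) y z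
      = x.sum fun m1 a => y.sum fun m2 b => z.sum fun m3 c =>
          Finsupp.single ((m1 - Finsupp.single μ 1) + m2 + m3) (m1 μ • φ a b c) := by
  rw [← triL_apply, pd_def, map_finsuppSum]
  refine Finsupp.sum_congr fun m1 _ => ?_
  rw [triL_apply, triExt_single_left]
  exact Finsupp.sum_congr fun m2 _ => Finsupp.sum_congr fun m3 _ => by
    rw [phi_nsmul₁]

lemma E2 (μ : Fin n) (x y z : FF A n) :
    triF n φ x (pdF n μ y) z
      = x.sum fun m1 a => y.sum fun m2 b => z.sum fun m3 c =>
          Finsupp.single (m1 + (m2 - Finsupp.single μ 1) + m3) (m2 μ • φ a b c) := by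
  rw [← triM_apply, pd_def, map_finsuppSum]
  have h1 : (y.sum fun m2 b => triM n φ x z
        (Finsupp.single (m2 - Finsupp.single μ 1) (m2 μ • b)))
      = y.sum fun m2 b => x.sum fun m1 a => z.sum fun m3 c =>
          Finsupp.single (m1 + (m2 - Finsupp.single μ 1) + m3) (m2 μ • φ a b c) := by
    refine Finsupp.sum_congr fun m2 _ => ?_
    rw [triM_apply, triExt_single_mid]
    exact Finsupp.sum_congr fun m1 _ => Finsupp.sum_congr fun m3 _ => by
      rw [phi_nsmul₂]
  rw [h1, Finsupp.sum_comm]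

lemma E3 (μ : Fin n) (x y z : FF A n) :
    triF n φ x y (pdF n μ z)
      = x.sum fun m1 a => y.sum fun m2 b => z.sum fun m3 c =>
          Finsupp.single (m1 + m2 + (m3 - Finsupp.single μ 1)) (m3 μ • φ a b c) := by
  rw [← triR_apply, pd_def, map_finsuppSum]
  have h1 : (z.sum fun m3 c => triR n φ x y
        (Finsupp.single (m3 - Finsupp.single μ 1) (m3 μ • c)))
      = z.sum fun m3 c => x.sum fun m1 a => y.sum fun m2 b =>
          Finsupp.single (m1 + m2 + (m3 - Finsupp.single μ 1)) (m3 μ • φ a b c) := by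
    refine Finsupp.sum_congr fun m3 _ => ?_
    rw [triR_apply, triExt_single_right]
    exact Finsupp.sum_congr fun m1 _ => Finsupp.sum_congr fun m2 _ => by
      rw [phi_nsmul₃]
  rw [h1, sum_comm3]

/-! ### the Leibniz rule -/

lemma pd_triExtF (μ : Fin n) (x y z : FF A n) :
    pdF n μ (triF n φ x y z)
      = triF n φ (pdF n μ x) y z + triF n φ x (pdF n μ y) z
        + triF n φ x y (pdF n μ z) := by
  rw [E0 φ μ x y z, E1 φ μ x y z, E2 φ μ x y z, E3 φ μ x y z]
  simp only [← Finsupp.sum_add]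
  exact Finsupp.sum_congr fun m1 _ => Finsupp.sum_congr fun m2 _ =>
    Finsupp.sum_congr fun m3 _ => key_point μ m1 m2 m3 _

/-! ### cyclicity -/

lemma triExt_cycF (hcyc : ∀ a b c : A, φ a b c = φ c a b) (x y z : FF A n) :
    triF n φ x y z = triF n φ z x y := by
  have h1 : triF n φ x y z
      = x.sum fun m1 a => y.sum fun m2 b => z.sum fun m3 c =>
          Finsupp.single (m3 + m1 + m2) (φ c a b) := by
    rw [triExt_def]
    refine Finsupp.sum_congr fun m1 _ => Finsupp.sum_congr fun m2 _ =>
      Finsupp.sum_congr fun m3 _ => ?_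
    rw [hcyc]
    congr 1
    abel
  rw [h1, triExt_def, ← sum_comm3 z x y
    (fun m3 c m1 a m2 b => Finsupp.single (m3 + m1 + m2) (φ c a b))]

/-! ### quadruple-sum forms for products -/

lemma M1 (x y z u : FF A n) :
    triF n φ (mulF x y) z u
      = x.sum fun m1 a => y.sum fun m2 b => z.sum fun m3 c => u.sum fun m4 d =>
          Finsupp.single (m1 + m2 + m3 + m4) (φ (a * b) c d) := by
  rw [← triL_apply, mulF_def, map_finsuppSum]
  refine Finsupp.sum_congr fun m1 _ => ?_
  rw [map_finsuppSum]
  refine Finsupp.sum_congr fun m2 _ => ?_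
  rw [triL_apply, triExt_single_left]

lemma M2 (x y z u : FF A n) :
    triF n φ x (mulF y z) u
      = x.sum fun m1 a => y.sum fun m2 b => z.sum fun m3 c => u.sum fun m4 d =>
          Finsupp.single (m1 + m2 + m3 + m4) (φ a (b * c) d) := by
  rw [← triM_apply, mulF_def, map_finsuppSum]
  have h1 : (y.sum fun m2 b => triM n φ x u (z.sum fun m3 c =>
        Finsupp.single (m2 + m3) (b * c)))
      = y.sum fun m2 b => z.sum fun m3 c => x.sum fun m1 a => u.sum fun m4 d =>
          Finsupp.single (m1 + m2 + m3 + m4) (φ a (b * c) d) := by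
    refine Finsupp.sum_congr fun m2 _ => ?_
    rw [map_finsuppSum]
    refine Finsupp.sum_congr fun m3 _ => ?_
    rw [triM_apply, triExt_single_mid]
    refine Finsupp.sum_congr fun m1 _ => Finsupp.sum_congr fun m4 _ => ?_
    congr 1
    abel
  rw [h1, ← sum_comm3 x y z (fun m1 a m2 b m3 c => u.sum fun m4 d =>
    Finsupp.single (m1 + m2 + m3 + m4) (φ a (b * c) d))]

lemma M3 (x y z u : FF A n) :
    triF n φ x y (mulF z u)
      = x.sum fun m1 a => y.sum fun m2 b => z.sum fun m3 c => u.sum fun m4 d =>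
          Finsupp.single (m1 + m2 + m3 + m4) (φ a b (c * d)) := by
  rw [← triR_apply, mulF_def, map_finsuppSum]
  have h1 : (z.sum fun m3 c => triR n φ x y (u.sum fun m4 d =>
        Finsupp.single (m3 + m4) (c * d)))
      = z.sum fun m3 c => u.sum fun m4 d => x.sum fun m1 a => y.sum fun m2 b =>
          Finsupp.single (m1 + m2 + m3 + m4) (φ a b (c * d)) := by
    refine Finsupp.sum_congr fun m3 _ => ?_
    rw [map_finsuppSum]
    refine Finsupp.sum_congr fun m4 _ => ?_
    rw [triR_apply, triExt_single_right]
    refine Finsupp.sum_congr fun m1 _ => Finsupp.sum_congr fun m2 _ => ?_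
    congr 1
    abel
  rw [h1, sum_comm4 z u x y, sum_comm4 u x y z]

lemma M4 (x y z u : FF A n) :
    triF n φ (mulF u x) y z
      = x.sum fun m1 a => y.sum fun m2 b => z.sum fun m3 c => u.sum fun m4 d =>
          Finsupp.single (m1 + m2 + m3 + m4) (φ (d * a) b c) := by
  rw [← triL_apply, mulF_def, map_finsuppSum]
  have h1 : (u.sum fun m4 d => x.sum fun m1 a =>
        triL n φ y z (Finsupp.single (m4 + m1) (d * a)))
      = u.sum fun m4 d => x.sum fun m1 a => y.sum fun m2 b => z.sum fun m3 c =>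
          Finsupp.single (m1 + m2 + m3 + m4) (φ (d * a) b c) := by
    refine Finsupp.sum_congr fun m4 _ => ?_
    refine Finsupp.sum_congr fun m1 _ => ?_
    rw [triL_apply, triExt_single_left]
    refine Finsupp.sum_congr fun m2 _ => Finsupp.sum_congr fun m3 _ => ?_
    congr 1
    abel
  have h2 : (u.sum fun m4 d => triL n φ y z (x.sum fun m1 a =>
        Finsupp.single (m4 + m1) (d * a)))
      = u.sum fun m4 d => x.sum fun m1 a =>
          triL n φ y z (Finsupp.single (m4 + m1) (d * a)) :=
    Finsupp.sum_congr fun m4 _ => map_finsuppSum _ _ _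
  rw [h2, h1, sum_comm4 u x y z]

/-! ### the cocycle identity for forms -/

lemma key_cocycleF
    (hcocycle : ∀ a b c d : A,
      φ (a * b) c d - φ a (b * c) d + φ a b (c * d) - φ (d * a) b c = 0)
    (x y z u : FF A n) :
    triF n φ (mulF x y) z u - triF n φ x (mulF y z) u + triF n φ x y (mulF z u)
      - triF n φ (mulF u x) y z = 0 := by
  rw [M1, M2, M3, M4]
  simp only [Finsupp.sum]
  simp only [← Finset.sum_sub_distrib, ← Finset.sum_add_distrib]
  refine Finset.sum_eq_zero fun m1 _ => Finset.sum_eq_zero fun m2 _ =>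
    Finset.sum_eq_zero fun m3 _ => Finset.sum_eq_zero fun m4 _ => ?_
  rw [← Finsupp.single_sub, ← Finsupp.single_add, ← Finsupp.single_sub,
    hcocycle, Finsupp.single_zero]

/-! ### torsion-freeness -/

lemma tor2 (x : PForm ℂ n) (h : x + x = 0) : x = 0 := by
  have h2 : (2 : ℂ) • x = 0 := by rw [two_smul]; exact h
  rcases smul_eq_zero.mp h2 with h' | h'
  · norm_num at h'
  · exact h'

lemma tor4 (x : PForm ℂ n) (h : x + x + x + x = 0) : x = 0 := by
  have h2 : (4 : ℂ) • x = 0 := by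
    rw [show (4 : ℂ) = 1 + 1 + 1 + 1 by norm_num, add_smul, add_smul, add_smul,
      one_smul]
    exact h
  rcases smul_eq_zero.mp h2 with h' | h'
  · norm_num at h'
  · exact h'

/-! ### reindexing sums over permutations -/

lemma perm_sum_reindex {M : Type*} [AddCommMonoid M] (π : Equiv.Perm (Fin 4))
    (f : Equiv.Perm (Fin 4) → M) :
    ∑ σ : Equiv.Perm (Fin 4), f σ = ∑ σ : Equiv.Perm (Fin 4), f (σ * π) := by
  rw [← Equiv.sum_comp (Equiv.mulRight π) f]
  exact Finset.sum_congr rfl fun σ _ => by rw [Equiv.coe_mulRight]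

lemma reindex_perm_smul {M : Type*} [AddCommGroup M] [Module ℤ M]
    (π : Equiv.Perm (Fin 4)) (F : (Fin 4 → Fin 4) → M) :
    (∑ σ : Equiv.Perm (Fin 4), ((Equiv.Perm.sign σ : ℤˣ) : ℤ) • F ⇑σ)
      = ∑ σ : Equiv.Perm (Fin 4),
          (((Equiv.Perm.sign σ : ℤˣ) : ℤ) * ((Equiv.Perm.sign π : ℤˣ) : ℤ))
            • F (⇑σ ∘ ⇑π) := by
  refine (perm_sum_reindex π fun σ => ((Equiv.Perm.sign σ : ℤˣ) : ℤ) • F ⇑σ).trans ?_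
  refine Finset.sum_congr rfl fun σ _ => ?_
  rw [Equiv.Perm.coe_mul, map_mul, Units.val_mul]

/-! ### the specific permutations -/

def pA : Equiv.Perm (Fin 4) := Equiv.swap 1 2 * Equiv.swap 2 3
def pB : Equiv.Perm (Fin 4) := Equiv.swap 2 3 * Equiv.swap 1 2
def pT : Equiv.Perm (Fin 4) := Equiv.swap 0 1
def pC : Equiv.Perm (Fin 4) := Equiv.swap 0 1 * Equiv.swap 1 2 * Equiv.swap 2 3
def pD : Equiv.Perm (Fin 4) := Equiv.swap 0 2 * Equiv.swap 1 3
def pE : Equiv.Perm (Fin 4) := Equiv.swap 2 3 * Equiv.swap 1 2 * Equiv.swap 0 1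

/-! ### transfer to `PForm` -/

lemma pd_triExt (μ : Fin n) (x y z : PForm A n) :
    pd n μ (triExt n φ x y z)
      = triExt n φ (pd n μ x) y z + triExt n φ x (pd n μ y) z
        + triExt n φ x y (pd n μ z) :=
  congrArg AddMonoidAlgebra.ofCoeff (pd_triExtF φ μ x.coeff y.coeff z.coeff)

lemma triExt_cyc (hcyc : ∀ a b c : A, φ a b c = φ c a b) (x y z : PForm A n) :
    triExt n φ x y z = triExt n φ z x y :=
  congrArg AddMonoidAlgebra.ofCoeff (triExt_cycF φ hcyc x.coeff y.coeff z.coeff)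

lemma triExt_sub_left (x x' y z : PForm A n) :
    triExt n φ (x - x') y z = triExt n φ x y z - triExt n φ x' y z :=
  congrArg AddMonoidAlgebra.ofCoeff (triExt_sub_leftF φ x.coeff x'.coeff y.coeff z.coeff)

lemma key_cocycle
    (hcocycle : ∀ a b c d : A,
      φ (a * b) c d - φ a (b * c) d + φ a b (c * d) - φ (d * a) b c = 0)
    (x y z u : PForm A n) :
    triExt n φ (x * y) z u - triExt n φ x (y * z) u + triExt n φ x y (z * u)
      - triExt n φ (u * x) y z = 0 := by
  have h := key_cocycleF φ hcocycle x.coeff y.coeff z.coeff u.coeff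
  rw [← coeff_mulF x y, ← coeff_mulF y z, ← coeff_mulF z u, ← coeff_mulF u x] at h
  apply AddMonoidAlgebra.coeff_injective
  exact h

end Aux

/-- For a flat connection `ω`, the 3-form `J = φ_C(ω,ω,ω)` built from a cyclic
2-cocycle `φ_C` is closed. -/
theorem cyclic_cocycle_threeform_closed (n : ℕ)
    (φ : A →ₗ[ℂ] A →ₗ[ℂ] A →ₗ[ℂ] ℂ)
    (hcyc : ∀ a b c : A, φ a b c = φ c a b)
    (hcocycle : ∀ a b c d : A,
      φ (a * b) c d - φ a (b * c) d + φ a b (c * d) - φ (d * a) b c = 0)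
    (w : Fin n → PForm A n)
    (hflat : ∀ μ ν : Fin n,
      pd n μ (w ν) - pd n ν (w μ) = w μ * w ν - w ν * w μ)
    (v : Fin 4 → Fin n) :
    ∑ σ : Equiv.Perm (Fin 4), ((Equiv.Perm.sign σ : ℤˣ) : ℤ) •
      pd n (v (σ 0)) (triExt n φ (w (v (σ 1))) (w (v (σ 2))) (w (v (σ 3)))) = 0 := by
  classical
  -- Step 1: Leibniz rule splits the sum into three pieces.
  have hsplit : (∑ σ : Equiv.Perm (Fin 4), ((Equiv.Perm.sign σ : ℤˣ) : ℤ) •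
        pd n (v (σ 0)) (triExt n φ (w (v (σ 1))) (w (v (σ 2))) (w (v (σ 3)))))
      = (∑ σ : Equiv.Perm (Fin 4), ((Equiv.Perm.sign σ : ℤˣ) : ℤ) •
          triExt n φ (pd n (v (σ 0)) (w (v (σ 1)))) (w (v (σ 2))) (w (v (σ 3))))
        + (∑ σ : Equiv.Perm (Fin 4), ((Equiv.Perm.sign σ : ℤˣ) : ℤ) •
            triExt n φ (w (v (σ 1))) (pd n (v (σ 0)) (w (v (σ 2)))) (w (v (σ 3))))
        + (∑ σ : Equiv.Perm (Fin 4), ((Equiv.Perm.sign σ : ℤˣ) : ℤ) •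
            triExt n φ (w (v (σ 1))) (w (v (σ 2))) (pd n (v (σ 0)) (w (v (σ 3))))) := by
    rw [← Finset.sum_add_distrib, ← Finset.sum_add_distrib]
    exact Finset.sum_congr rfl fun σ _ => by
      rw [pd_triExt φ, smul_add, smul_add]
  -- Step 2: the second piece equals the first.
  have h21 : (∑ σ : Equiv.Perm (Fin 4), ((Equiv.Perm.sign σ : ℤˣ) : ℤ) •
        triExt n φ (w (v (σ 1))) (pd n (v (σ 0)) (w (v (σ 2)))) (w (v (σ 3))))
      = ∑ σ : Equiv.Perm (Fin 4), ((Equiv.Perm.sign σ : ℤˣ) : ℤ) •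
          triExt n φ (pd n (v (σ 0)) (w (v (σ 1)))) (w (v (σ 2))) (w (v (σ 3))) := by
    have hr := reindex_perm_smul (M := PForm ℂ n) pA
      (fun s => triExt n φ (pd n (v (s 0)) (w (v (s 1)))) (w (v (s 2))) (w (v (s 3))))
    simp only [Function.comp_apply, show pA 0 = 0 from by decide,
      show pA 1 = 2 from by decide, show pA 2 = 3 from by decide,
      show pA 3 = 1 from by decide,
      show ((Equiv.Perm.sign pA : ℤˣ) : ℤ) = 1 from by decide, mul_one] at hr
    rw [hr]
    refine Finset.sum_congr rfl fun σ _ => ?_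
    rw [triExt_cyc φ hcyc, triExt_cyc φ hcyc]
  -- Step 3: the third piece equals the first.
  have h31 : (∑ σ : Equiv.Perm (Fin 4), ((Equiv.Perm.sign σ : ℤˣ) : ℤ) •
        triExt n φ (w (v (σ 1))) (w (v (σ 2))) (pd n (v (σ 0)) (w (v (σ 3)))))
      = ∑ σ : Equiv.Perm (Fin 4), ((Equiv.Perm.sign σ : ℤˣ) : ℤ) •
          triExt n φ (pd n (v (σ 0)) (w (v (σ 1)))) (w (v (σ 2))) (w (v (σ 3))) := by
    have hr := reindex_perm_smul (M := PForm ℂ n) pB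
      (fun s => triExt n φ (pd n (v (s 0)) (w (v (s 1)))) (w (v (s 2))) (w (v (s 3))))
    simp only [Function.comp_apply, show pB 0 = 0 from by decide,
      show pB 1 = 3 from by decide, show pB 2 = 1 from by decide,
      show pB 3 = 2 from by decide,
      show ((Equiv.Perm.sign pB : ℤˣ) : ℤ) = 1 from by decide, mul_one] at hr
    rw [hr]
    refine Finset.sum_congr rfl fun σ _ => ?_
    rw [triExt_cyc φ hcyc]
  -- Step 4: the antisymmetrized cocycle identity.
  have hq : (∑ σ : Equiv.Perm (Fin 4), ((Equiv.Perm.sign σ : ℤˣ) : ℤ) •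
        (triExt n φ (w (v (σ 0)) * w (v (σ 1))) (w (v (σ 2))) (w (v (σ 3)))
          - triExt n φ (w (v (σ 0))) (w (v (σ 1)) * w (v (σ 2))) (w (v (σ 3)))
          + triExt n φ (w (v (σ 0))) (w (v (σ 1))) (w (v (σ 2)) * w (v (σ 3)))
          - triExt n φ (w (v (σ 3)) * w (v (σ 0))) (w (v (σ 1))) (w (v (σ 2)))))
      = 0 :=
    Finset.sum_eq_zero fun σ _ => by rw [key_cocycle φ hcocycle, smul_zero]
  simp only [smul_sub, smul_add] at hq
  rw [Finset.sum_sub_distrib, Finset.sum_add_distrib, Finset.sum_sub_distrib] at hq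
  -- identify the pieces of hq
  have h2' : (∑ σ : Equiv.Perm (Fin 4), ((Equiv.Perm.sign σ : ℤˣ) : ℤ) •
        triExt n φ (w (v (σ 0))) (w (v (σ 1)) * w (v (σ 2))) (w (v (σ 3))))
      = -(∑ σ : Equiv.Perm (Fin 4), ((Equiv.Perm.sign σ : ℤˣ) : ℤ) •
          triExt n φ (w (v (σ 0)) * w (v (σ 1))) (w (v (σ 2))) (w (v (σ 3)))) := by
    have hr := reindex_perm_smul (M := PForm ℂ n) pC
      (fun s => triExt n φ (w (v (s 0)) * w (v (s 1))) (w (v (s 2))) (w (v (s 3))))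
    simp only [Function.comp_apply, show pC 0 = 1 from by decide,
      show pC 1 = 2 from by decide, show pC 2 = 3 from by decide,
      show pC 3 = 0 from by decide,
      show ((Equiv.Perm.sign pC : ℤˣ) : ℤ) = -1 from by decide, mul_neg_one,
      neg_smul, Finset.sum_neg_distrib] at hr
    have hc : (∑ σ : Equiv.Perm (Fin 4), ((Equiv.Perm.sign σ : ℤˣ) : ℤ) •
          triExt n φ (w (v (σ 0))) (w (v (σ 1)) * w (v (σ 2))) (w (v (σ 3))))
        = ∑ σ : Equiv.Perm (Fin 4), ((Equiv.Perm.sign σ : ℤˣ) : ℤ) •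
            triExt n φ (w (v (σ 1)) * w (v (σ 2))) (w (v (σ 3))) (w (v (σ 0))) :=
      Finset.sum_congr rfl fun σ _ => by
        rw [triExt_cyc φ hcyc, triExt_cyc φ hcyc]
    rw [hc, hr, neg_neg]
  have h3' : (∑ σ : Equiv.Perm (Fin 4), ((Equiv.Perm.sign σ : ℤˣ) : ℤ) •
        triExt n φ (w (v (σ 0))) (w (v (σ 1))) (w (v (σ 2)) * w (v (σ 3))))
      = ∑ σ : Equiv.Perm (Fin 4), ((Equiv.Perm.sign σ : ℤˣ) : ℤ) •
          triExt n φ (w (v (σ 0)) * w (v (σ 1))) (w (v (σ 2))) (w (v (σ 3))) := by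
    have hr := reindex_perm_smul (M := PForm ℂ n) pD
      (fun s => triExt n φ (w (v (s 0)) * w (v (s 1))) (w (v (s 2))) (w (v (s 3))))
    simp only [Function.comp_apply, show pD 0 = 2 from by decide,
      show pD 1 = 3 from by decide, show pD 2 = 0 from by decide,
      show pD 3 = 1 from by decide,
      show ((Equiv.Perm.sign pD : ℤˣ) : ℤ) = 1 from by decide, mul_one] at hr
    have hc : (∑ σ : Equiv.Perm (Fin 4), ((Equiv.Perm.sign σ : ℤˣ) : ℤ) •
          triExt n φ (w (v (σ 0))) (w (v (σ 1))) (w (v (σ 2)) * w (v (σ 3))))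
        = ∑ σ : Equiv.Perm (Fin 4), ((Equiv.Perm.sign σ : ℤˣ) : ℤ) •
            triExt n φ (w (v (σ 2)) * w (v (σ 3))) (w (v (σ 0))) (w (v (σ 1))) :=
      Finset.sum_congr rfl fun σ _ => by rw [triExt_cyc φ hcyc]
    rw [hc, ← hr]
  have h4' : (∑ σ : Equiv.Perm (Fin 4), ((Equiv.Perm.sign σ : ℤˣ) : ℤ) •
        triExt n φ (w (v (σ 3)) * w (v (σ 0))) (w (v (σ 1))) (w (v (σ 2))))
      = -(∑ σ : Equiv.Perm (Fin 4), ((Equiv.Perm.sign σ : ℤˣ) : ℤ) •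
          triExt n φ (w (v (σ 0)) * w (v (σ 1))) (w (v (σ 2))) (w (v (σ 3)))) := by
    have hr := reindex_perm_smul (M := PForm ℂ n) pE
      (fun s => triExt n φ (w (v (s 0)) * w (v (s 1))) (w (v (s 2))) (w (v (s 3))))
    simp only [Function.comp_apply, show pE 0 = 3 from by decide,
      show pE 1 = 0 from by decide, show pE 2 = 1 from by decide,
      show pE 3 = 2 from by decide,
      show ((Equiv.Perm.sign pE : ℤˣ) : ℤ) = -1 from by decide, mul_neg_one,
      neg_smul, Finset.sum_neg_distrib] at hr
    rw [hr, neg_neg]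
  rw [h2', h3', h4'] at hq
  simp only [sub_neg_eq_add] at hq
  have hS2 : (∑ σ : Equiv.Perm (Fin 4), ((Equiv.Perm.sign σ : ℤˣ) : ℤ) •
        triExt n φ (w (v (σ 0)) * w (v (σ 1))) (w (v (σ 2))) (w (v (σ 3)))) = 0 :=
    tor4 _ hq
  -- Step 5: flatness identifies the first piece with the product sum.
  have hA1neg : (∑ σ : Equiv.Perm (Fin 4), ((Equiv.Perm.sign σ : ℤˣ) : ℤ) •
        triExt n φ (pd n (v (σ 0)) (w (v (σ 1)))) (w (v (σ 2))) (w (v (σ 3))))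
      = ∑ σ : Equiv.Perm (Fin 4), -(((Equiv.Perm.sign σ : ℤˣ) : ℤ) •
          triExt n φ (pd n (v (σ 1)) (w (v (σ 0)))) (w (v (σ 2))) (w (v (σ 3)))) := by
    have hr := reindex_perm_smul (M := PForm ℂ n) pT
      (fun s => triExt n φ (pd n (v (s 0)) (w (v (s 1)))) (w (v (s 2))) (w (v (s 3))))
    simp only [Function.comp_apply, show pT 0 = 1 from by decide,
      show pT 1 = 0 from by decide, show pT 2 = 2 from by decide,
      show pT 3 = 3 from by decide,
      show ((Equiv.Perm.sign pT : ℤˣ) : ℤ) = -1 from by decide, mul_neg_one,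
      neg_smul] at hr
    exact hr
  have hS2neg : (∑ σ : Equiv.Perm (Fin 4), ((Equiv.Perm.sign σ : ℤˣ) : ℤ) •
        triExt n φ (w (v (σ 0)) * w (v (σ 1))) (w (v (σ 2))) (w (v (σ 3))))
      = ∑ σ : Equiv.Perm (Fin 4), -(((Equiv.Perm.sign σ : ℤˣ) : ℤ) •
          triExt n φ (w (v (σ 1)) * w (v (σ 0))) (w (v (σ 2))) (w (v (σ 3)))) := by
    have hr := reindex_perm_smul (M := PForm ℂ n) pT
      (fun s => triExt n φ (w (v (s 0)) * w (v (s 1))) (w (v (s 2))) (w (v (s 3))))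
    simp only [Function.comp_apply, show pT 0 = 1 from by decide,
      show pT 1 = 0 from by decide, show pT 2 = 2 from by decide,
      show pT 3 = 3 from by decide,
      show ((Equiv.Perm.sign pT : ℤˣ) : ℤ) = -1 from by decide, mul_neg_one,
      neg_smul] at hr
    exact hr
  have hA1A1 : (∑ σ : Equiv.Perm (Fin 4), ((Equiv.Perm.sign σ : ℤˣ) : ℤ) •
        triExt n φ (pd n (v (σ 0)) (w (v (σ 1)))) (w (v (σ 2))) (w (v (σ 3))))
      + (∑ σ : Equiv.Perm (Fin 4), ((Equiv.Perm.sign σ : ℤˣ) : ℤ) •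
          triExt n φ (pd n (v (σ 0)) (w (v (σ 1)))) (w (v (σ 2))) (w (v (σ 3))))
      = (∑ σ : Equiv.Perm (Fin 4), ((Equiv.Perm.sign σ : ℤˣ) : ℤ) •
          triExt n φ (w (v (σ 0)) * w (v (σ 1))) (w (v (σ 2))) (w (v (σ 3))))
        + (∑ σ : Equiv.Perm (Fin 4), ((Equiv.Perm.sign σ : ℤˣ) : ℤ) •
            triExt n φ (w (v (σ 0)) * w (v (σ 1))) (w (v (σ 2))) (w (v (σ 3)))) := by
    nth_rewrite 2 [hA1neg]
    nth_rewrite 2 [hS2neg]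
    rw [← Finset.sum_add_distrib, ← Finset.sum_add_distrib]
    refine Finset.sum_congr rfl fun σ _ => ?_
    rw [← sub_eq_add_neg, ← smul_sub, ← triExt_sub_left, hflat (v (σ 0)) (v (σ 1)),
      triExt_sub_left, smul_sub, sub_eq_add_neg]
  have hA1 : (∑ σ : Equiv.Perm (Fin 4), ((Equiv.Perm.sign σ : ℤˣ) : ℤ) •
        triExt n φ (pd n (v (σ 0)) (w (v (σ 1)))) (w (v (σ 2))) (w (v (σ 3)))) = 0 := by
    refine tor2 _ ?_
    rw [hA1A1, hS2, add_zero]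
  rw [hsplit, h21, h31, hA1]
  simp
end
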